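/- arXiv:math/9809174 — 3 statements merged into one kernel-verified Lean document; each statement's English description precedes it below -/
import Mathlib

section
/- For every integer m ≥ 2, the group presented by ⟨x, a₁ ∣ relation of H_m⟩ is isomorphic to the group I_m presented by ⟨x, a₁, a₂, …, a_m ∣ x = a₁a₂, x = a₂a₃, …, x = a_{m-1}a_m, x = a_m a₁⟩, where H_{2k} has relation x^k a₁ = a₁ x^k and H_{2k+1} has relation x^{k+1} = a₁ x^k a₁. -/
/-- Cyclic successor on `Fin m`. -/
def finCycSucc {m : ℕ} (i : Fin m) : Fin m :=
  ⟨(i.val + 1) % m, Nat.mod_lt _ i.pos⟩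

/-- The relations of the presentation
`I_m = ⟨x, a₁, …, a_m ∣ x = a₁a₂, x = a₂a₃, …, x = a_m a₁⟩`,
where `Sum.inl i` is the generator `a_{i+1}` (for `i : Fin m`) and `Sum.inr ()` is `x`. -/
def IRels (m : ℕ) : Set (FreeGroup (Fin m ⊕ Unit)) :=
  {r | ∃ i : Fin m,
    r = FreeGroup.of (Sum.inr ()) *
      (FreeGroup.of (Sum.inl i) * FreeGroup.of (Sum.inl (finCycSucc i)))⁻¹}

section Bseq

variable {G : Type*} [Group G]

/-- The word representing the generator `a_{j+1}` in terms of `x` and `a₁`. -/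
def bseq (x a : G) : ℕ → G
  | 0 => a
  | j + 1 => (bseq x a j)⁻¹ * x

lemma bseq_succ (x a : G) (j : ℕ) : bseq x a (j + 1) = (bseq x a j)⁻¹ * x := rfl

lemma map_bseq {H : Type*} [Group H] (f : G →* H) (x a : G) (j : ℕ) :
    f (bseq x a j) = bseq (f x) (f a) j := by
  induction j with
  | zero => rfl
  | succ j ih => simp [bseq_succ, ih]

lemma bseq_closed (x a : G) (j : ℕ) :
    bseq x a (2 * j) = x ^ (-(j : ℤ)) * a * x ^ (j : ℤ) ∧
    bseq x a (2 * j + 1) = x ^ (-(j : ℤ)) * a⁻¹ * x ^ ((j : ℤ) + 1) := by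
  induction j with
  | zero => constructor <;> simp [bseq, bseq_succ]
  | succ j ih =>
    obtain ⟨h1, h2⟩ := ih
    have e1 : 2 * (j + 1) = (2 * j + 1) + 1 := by ring
    have e2 : 2 * (j + 1) + 1 = ((2 * j + 1) + 1) + 1 := by ring
    have hA : bseq x a (2 * (j + 1)) = x ^ (-((j : ℤ) + 1)) * a * x ^ ((j : ℤ) + 1) := by
      rw [e1, bseq_succ, h2]; group
    constructor
    · rw [hA]; push_cast; ring_nf
    · rw [e2, bseq_succ, ← e1, hA]; push_cast; group

lemma wrap_iff_even (x a : G) (j : ℕ) :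
    x = bseq x a (2 * (j + 1) - 1) * a ↔ x ^ (j + 1) * a = a * x ^ (j + 1) := by
  have e : 2 * (j + 1) - 1 = 2 * j + 1 := by omega
  rw [e, (bseq_closed x a j).2, ← mul_right_inj (a * x ^ (j : ℤ))]
  have h1 : a * x ^ (j : ℤ) * x = a * x ^ ((j : ℤ) + 1) := by group
  have h2 : a * x ^ (j : ℤ) * (x ^ (-(j : ℤ)) * a⁻¹ * x ^ ((j : ℤ) + 1) * a)
      = x ^ ((j : ℤ) + 1) * a := by group
  have h3 : x ^ ((j : ℤ) + 1) = x ^ (j + 1) := by norm_cast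
  rw [h1, h2, h3, eq_comm]

lemma wrap_iff_odd (x a : G) (k : ℕ) :
    x = bseq x a (2 * k) * a ↔ x ^ (k + 1) = a * x ^ k * a := by
  rw [(bseq_closed x a k).1, ← mul_right_inj (x ^ (k : ℤ))]
  have h1 : x ^ (k : ℤ) * x = x ^ ((k : ℤ) + 1) := by group
  have h2 : x ^ (k : ℤ) * (x ^ (-(k : ℤ)) * a * x ^ (k : ℤ) * a) = a * x ^ (k : ℤ) * a := by
    group
  have h3 : x ^ ((k : ℤ) + 1) = x ^ (k + 1) := by norm_cast
  have h4 : x ^ (k : ℤ) = x ^ k := by norm_cast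
  rw [h1, h2, h3, h4]

end Bseq

section Main

variable {m : ℕ}

/-- `x` in `I_m`. -/
def Ix (m : ℕ) : PresentedGroup (IRels m) := .of (Sum.inr ())

/-- `a_{i+1}` in `I_m`. -/
def Ia (i : Fin m) : PresentedGroup (IRels m) := .of (Sum.inl i)

lemma Irel (i : Fin m) : Ix m = Ia i * Ia (finCycSucc i) := by
  have h : (PresentedGroup.mk (IRels m))
      (FreeGroup.of (Sum.inr ()) *
        (FreeGroup.of (Sum.inl i) * FreeGroup.of (Sum.inl (finCycSucc i)))⁻¹) = 1 := by
    change (QuotientGroup.mk _ : PresentedGroup (IRels m)) = 1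
    rw [QuotientGroup.eq_one_iff]
    exact Subgroup.subset_normalClosure ⟨i, rfl⟩
  rw [map_mul, map_inv, map_mul, mul_inv_eq_one] at h
  exact h

lemma Ia_eq_bseq (hm : 0 < m) (j : ℕ) (hj : j < m) :
    Ia ⟨j, hj⟩ = bseq (Ix m) (Ia ⟨0, hm⟩) j := by
  induction j with
  | zero => rfl
  | succ j ih =>
    have hjm : j < m := Nat.lt_of_succ_lt hj
    have hsucc : finCycSucc (⟨j, hjm⟩ : Fin m) = ⟨j + 1, hj⟩ := by
      simp [finCycSucc, Nat.mod_eq_of_lt hj]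
    have h := Irel (⟨j, hjm⟩ : Fin m)
    rw [hsucc] at h
    rw [bseq_succ, ← ih hjm, eq_inv_mul_iff_mul_eq, ← h]

lemma Iwrap (hm : 2 ≤ m) :
    Ix m = bseq (Ix m) (Ia ⟨0, by omega⟩) (m - 1) * Ia ⟨0, by omega⟩ := by
  have hm1 : m - 1 < m := by omega
  have h := Irel (⟨m - 1, hm1⟩ : Fin m)
  have hsucc : finCycSucc (⟨m - 1, hm1⟩ : Fin m) = ⟨0, by omega⟩ := by
    have : m - 1 + 1 = m := by omega
    simp [finCycSucc, this]
  rw [hsucc, Ia_eq_bseq (by omega) (m - 1) hm1] at h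
  exact h

lemma main_aux (m : ℕ) (hm : 2 ≤ m) (r : FreeGroup (Fin 2))
    (hiff : ∀ (G : Type) (_ : Group G) (x a : G),
      FreeGroup.lift ![x, a] r = 1 ↔ x = bseq x a (m - 1) * a) :
    Nonempty (PresentedGroup ({r} : Set (FreeGroup (Fin 2))) ≃* PresentedGroup (IRels m)) := by
  set H := PresentedGroup ({r} : Set (FreeGroup (Fin 2)))
  set xH : H := .of 0
  set aH : H := .of 1
  set A0 : PresentedGroup (IRels m) := Ia ⟨0, by omega⟩
  -- the relator holds in H
  have hliftH : FreeGroup.lift ![xH, aH] = PresentedGroup.mk ({r} : Set (FreeGroup (Fin 2))) := by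
    apply FreeGroup.ext_hom
    intro a
    rw [FreeGroup.lift_apply_of]
    fin_cases a <;> rfl
  have hrH : FreeGroup.lift ![xH, aH] r = 1 := by
    rw [hliftH]
    change (QuotientGroup.mk r : H) = 1
    rw [QuotientGroup.eq_one_iff]
    exact Subgroup.subset_normalClosure rfl
  have hwrapH : xH = bseq xH aH (m - 1) * aH := (hiff H _ xH aH).mp hrH
  -- the relator holds in I
  have hrI : FreeGroup.lift ![Ix m, A0] r = 1 :=
    (hiff (PresentedGroup (IRels m)) _ (Ix m) A0).mpr (Iwrap hm)
  -- φ : H → I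
  have hφrels : ∀ s ∈ ({r} : Set (FreeGroup (Fin 2))), FreeGroup.lift ![Ix m, A0] s = 1 := by
    rintro s rfl; exact hrI
  let φ : H →* PresentedGroup (IRels m) := PresentedGroup.toGroup hφrels
  -- ψ : I → H
  let g : Fin m ⊕ Unit → H := fun s => Sum.rec (fun i => bseq xH aH i.val) (fun _ => xH) s
  have hψrels : ∀ s ∈ IRels m, FreeGroup.lift g s = 1 := by
    rintro s ⟨i, rfl⟩
    rw [map_mul, map_inv, map_mul, mul_inv_eq_one, FreeGroup.lift_apply_of, FreeGroup.lift_apply_of,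
      FreeGroup.lift_apply_of]
    show xH = bseq xH aH i.val * bseq xH aH ((i.val + 1) % m)
    rcases Nat.lt_or_ge (i.val + 1) m with h | h
    · rw [Nat.mod_eq_of_lt h, bseq_succ]
      group
    · have hi : i.val = m - 1 := by omega
      have h0 : (i.val + 1) % m = 0 := by
        have : i.val + 1 = m := by omega
        simp [this]
      rw [h0, hi]
      exact hwrapH
  let ψ : PresentedGroup (IRels m) →* H := PresentedGroup.toGroup hψrels
  -- φ on generators
  have hφx : φ xH = Ix m := PresentedGroup.toGroup.of hφrels
  have hφa : φ aH = A0 := PresentedGroup.toGroup.of hφrels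
  have hψx : ψ (Ix m) = xH := PresentedGroup.toGroup.of hψrels
  have hψa : ∀ i : Fin m, ψ (Ia i) = bseq xH aH i.val := fun i =>
    PresentedGroup.toGroup.of hψrels
  refine ⟨MonoidHom.toMulEquiv φ ψ ?_ ?_⟩
  · apply PresentedGroup.ext
    intro x
    fin_cases x
    · show ψ (φ xH) = xH
      rw [hφx, hψx]
    · show ψ (φ aH) = aH
      rw [hφa, hψa]
      rfl
  · apply PresentedGroup.ext
    rintro (i | u)
    · show φ (ψ (Ia i)) = Ia i
      rw [hψa, map_bseq, hφx, hφa, ← Ia_eq_bseq (by omega) i.val i.isLt]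
    · show φ (ψ (Ix m)) = Ix m
      rw [hψx, hφx]

end Main

/-- For every integer `m ≥ 2`, the group `H_m` (with presentation
`⟨x, a₁ ∣ x^k a₁ = a₁ x^k⟩` when `m = 2k`, and `⟨x, a₁ ∣ x^{k+1} = a₁ x^k a₁⟩`
when `m = 2k+1`; generator `0` is `x`, generator `1` is `a₁`) is isomorphic to the
group `I_m = ⟨x, a₁, …, a_m ∣ x = a₁a₂, …, x = a_m a₁⟩`. -/
theorem H_iso_I (m : ℕ) (hm : 2 ≤ m) :
    (∀ k : ℕ, m = 2 * k →
      Nonempty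
        ((PresentedGroup
            ({(FreeGroup.of 0) ^ k * FreeGroup.of 1 *
                (FreeGroup.of 1 * (FreeGroup.of 0) ^ k)⁻¹} : Set (FreeGroup (Fin 2)))) ≃*
          PresentedGroup (IRels m))) ∧
    (∀ k : ℕ, m = 2 * k + 1 →
      Nonempty
        ((PresentedGroup
            ({(FreeGroup.of 0) ^ (k + 1) *
                (FreeGroup.of 1 * (FreeGroup.of 0) ^ k * FreeGroup.of 1)⁻¹} :
              Set (FreeGroup (Fin 2)))) ≃*
          PresentedGroup (IRels m))) := by
  constructor
  · rintro k rfl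
    obtain ⟨j, rfl⟩ : ∃ j, k = j + 1 := ⟨k - 1, by omega⟩
    apply main_aux _ hm
    intro G _ x a
    simp only [map_mul, map_inv, map_pow, FreeGroup.lift_apply_of, Matrix.cons_val_zero,
      Matrix.cons_val_one, Matrix.head_cons]
    rw [mul_inv_eq_one]
    exact (wrap_iff_even x a j).symm
  · rintro k rfl
    apply main_aux _ hm
    intro G _ x a
    simp only [map_mul, map_inv, map_pow, FreeGroup.lift_apply_of, Matrix.cons_val_zero,
      Matrix.cons_val_one, Matrix.head_cons]
    rw [mul_inv_eq_one]
    have e : 2 * k + 1 - 1 = 2 * k := by omega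
    rw [e]
    exact (wrap_iff_odd x a k).symm
end

section
/- Let Γ be a finite directed graph with edge labels ≥ 3 containing no triangles. Then in the link L_Γ, every embedded cycle of length 4 consists entirely of middle edges (edges joining level 2 to level 3). -/
/-- The generators of the presentation `I_Γ` associated with a directed labeled graph
`Γ` on vertex set `ι`: a generator `xgen i j` for each directed edge `i → j`, a
generator `vgen i` for each vertex `i`, and generators `dgen i j k` (`3 ≤ k ≤ label`)
for each directed edge `i → j`. -/
inductive GammaGen (ι : Type*) where
  | xgen (i j : ι)
  | vgen (i : ι)
  | dgen (i j : ι) (k : ℕ)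

/-- `gSeq i j k` is the generator `d_k` of the local piece of the edge `i → j`, where
`d₁ = a_i`, `d₂ = a_j`, and `d_k` (`k ≥ 3`) are the extra generators. -/
def gSeq {ι : Type*} (i j : ι) (k : ℕ) : GammaGen ι :=
  if k = 1 then .vgen i else if k = 2 then .vgen j else .dgen i j k

/-- The triples `(w, g, h)` such that `w = g·h` is a relation of `I_Γ`: for each
directed edge `i → j` with label `m`, the cyclic relations `x_{ij} = d_k d_{k+1}`
(`1 ≤ k ≤ m`, indices mod `m`). -/
def relTriplesGamma {ι : Type*} (E : ι → ι → Prop) (lab : ι → ι → ℕ) :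
    Set (GammaGen ι × GammaGen ι × GammaGen ι) :=
  {t | ∃ i j, E i j ∧ ∃ k : ℕ, 1 ≤ k ∧ k ≤ lab i j ∧
        t = (.xgen i j, gSeq i j k, gSeq i j (k % lab i j + 1))}

/-- Vertices of the link `L_Γ`: a pair of vertices for each generator of `I_Γ`;
the Boolean is `true` for the barred vertex. -/
abbrev GammaVert (ι : Type*) := GammaGen ι × Bool

/-- Each relation `w = g·h` contributes the corner edges `{ḡ, h}`, `{w, g}`,
`{h̄, w̄}` to the link. -/
def linkRelGamma {ι : Type*} (E : ι → ι → Prop) (lab : ι → ι → ℕ)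
    (u v : GammaVert ι) : Prop :=
  ∃ t ∈ relTriplesGamma E lab,
    ((u, v) = ((t.2.1, true), (t.2.2, false)) ∨
     (u, v) = ((t.1, false), (t.2.1, false)) ∨
     (u, v) = ((t.2.2, true), (t.1, true)))

/-- The link `L_Γ` of the unique 0-cell of the 2-complex `K_Γ`. -/
def LinkGamma {ι : Type*} (E : ι → ι → Prop) (lab : ι → ι → ℕ) :
    SimpleGraph (GammaVert ι) :=
  SimpleGraph.fromRel (linkRelGamma E lab)

/-- Levels of link vertices: barred `x`-generators at level 1, barred others at
level 2, unbarred others at level 3, unbarred `x`-generators at level 4. -/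
def lvlGamma {ι : Type*} : GammaVert ι → ℕ
  | (.xgen _ _, true) => 1
  | (.xgen _ _, false) => 4
  | (_, true) => 2
  | (_, false) => 3

/-- A link edge is a middle edge when it joins a level-2 vertex to a level-3 vertex. -/
def IsMiddle {ι : Type*} (u v : GammaVert ι) : Prop :=
  (lvlGamma u = 2 ∧ lvlGamma v = 3) ∨ (lvlGamma u = 3 ∧ lvlGamma v = 2)

/-- Forbidden configuration of type A: a triangle of `Γ` with two edges oriented out
of a common vertex (equivalently, a triangle containing a directed path of length 2
whose third edge closes it up non-cyclically; both orientations of the third edge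
give isomorphic oriented graphs). -/
def TypeA {ι : Type*} (E : ι → ι → Prop) : Prop :=
  ∃ u v w : ι, u ≠ v ∧ u ≠ w ∧ v ≠ w ∧ E w u ∧ E w v ∧ (E u v ∨ E v u)

/-- Forbidden configuration of type B: four distinct vertices forming a 4-cycle with
alternating orientations. -/
def TypeB {ι : Type*} (E : ι → ι → Prop) : Prop :=
  ∃ p q r s : ι, p ≠ q ∧ p ≠ r ∧ p ≠ s ∧ q ≠ r ∧ q ≠ s ∧ r ≠ s ∧
    E q p ∧ E q r ∧ E s p ∧ E s r

/-- `Γ` contains no triangles (as an undirected graph). -/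
def TriangleFree {ι : Type*} (E : ι → ι → Prop) : Prop :=
  ¬∃ u v w : ι, u ≠ v ∧ u ≠ w ∧ v ≠ w ∧
    (E u v ∨ E v u) ∧ (E v w ∨ E w v) ∧ (E u w ∨ E w u)

section Aux
open GammaGen

variable {ι : Type*}

@[simp] lemma gSeq_ne_xgen (i j a b : ι) (k : ℕ) : gSeq i j k ≠ xgen a b := by
  simp only [gSeq]; split_ifs <;> simp

@[simp] lemma xgen_ne_gSeq (i j a b : ι) (k : ℕ) : xgen a b ≠ gSeq i j k :=
  (gSeq_ne_xgen i j a b k).symm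

lemma gSeq_eq_vgen {i j t : ι} {k : ℕ} (h : gSeq i j k = vgen t) :
    (k = 1 ∧ t = i) ∨ (k = 2 ∧ t = j) := by
  simp only [gSeq] at h; split_ifs at h with h1 h2
  · exact Or.inl ⟨h1, by injection h with h'; exact h'.symm⟩
  · exact Or.inr ⟨h2, by injection h with h'; exact h'.symm⟩

lemma gSeq_of_big {i j : ι} {k : ℕ} (h1 : k ≠ 1) (h2 : k ≠ 2) :
    gSeq i j k = dgen i j k := by simp [gSeq, h1, h2]

lemma vgen_of_small {i j : ι} {k : ℕ} (h : k = 1 ∨ k = 2) :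
    ∃ t, gSeq i j k = vgen t ∧ (t = i ∨ t = j) := by
  rcases h with rfl | rfl
  · exact ⟨i, by simp [gSeq], Or.inl rfl⟩
  · exact ⟨j, by norm_num [gSeq], Or.inr rfl⟩

lemma gSeq_eq_cases {i j i' j' : ι} {k k' : ℕ} (h : gSeq i j k = gSeq i' j' k') :
    (i = i' ∧ j = j' ∧ k = k') ∨ ((k = 1 ∨ k = 2) ∧ (k' = 1 ∨ k' = 2)) := by
  by_cases hk : k = 1 ∨ k = 2 <;> by_cases hk' : k' = 1 ∨ k' = 2
  · exact Or.inr ⟨hk, hk'⟩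
  · push_neg at hk'
    obtain ⟨t, ht, -⟩ := vgen_of_small (i := i) (j := j) hk
    rw [ht, gSeq_of_big hk'.1 hk'.2] at h
    exact absurd h (by simp)
  · push_neg at hk
    obtain ⟨t, ht, -⟩ := vgen_of_small (i := i') (j := j') hk'
    rw [ht, gSeq_of_big hk.1 hk.2] at h
    exact absurd h (by simp)
  · push_neg at hk; push_neg at hk'
    rw [gSeq_of_big hk.1 hk.2, gSeq_of_big hk'.1 hk'.2] at h
    injection h with h1 h2 h3
    exact Or.inl ⟨h1, h2, h3⟩

lemma gSeq_inj {i j : ι} {k k' : ℕ} (hij : i ≠ j)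
    (h : gSeq i j k = gSeq i j k') : k = k' := by
  rcases gSeq_eq_cases h with ⟨-, -, h⟩ | ⟨h1, h2⟩
  · exact h
  · rcases h1 with rfl | rfl <;> rcases h2 with rfl | rfl
    · rfl
    · simp [gSeq] at h; exact absurd h hij
    · simp [gSeq] at h; exact absurd h.symm hij
    · rfl

lemma succ_bounds {k m : ℕ} (h1 : 1 ≤ k) (h2 : k ≤ m) :
    1 ≤ k % m + 1 ∧ k % m + 1 ≤ m := by
  have := Nat.mod_lt k (show 0 < m by omega)
  omega

lemma succ_inj {k k' m : ℕ} (h1 : 1 ≤ k) (h2 : k ≤ m) (h1' : 1 ≤ k') (h2' : k' ≤ m)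
    (h : k % m + 1 = k' % m + 1) : k = k' := by
  have e1 : k % m = if k = m then 0 else k := by
    split_ifs with h'
    · simp [h']
    · exact Nat.mod_eq_of_lt (by omega)
  have e2 : k' % m = if k' = m then 0 else k' := by
    split_ifs with h'
    · simp [h']
    · exact Nat.mod_eq_of_lt (by omega)
  rw [e1, e2] at h
  split_ifs at h <;> omega

lemma both_vgen {i j s t : ι} {k m : ℕ} (hm : 3 ≤ m) (hk1 : 1 ≤ k) (hk2 : k ≤ m)
    (h1 : gSeq i j k = vgen s) (h2 : gSeq i j (k % m + 1) = vgen t) :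
    k = 1 ∧ s = i ∧ t = j := by
  rcases gSeq_eq_vgen h1 with ⟨rfl, rfl⟩ | ⟨rfl, rfl⟩
  · have hmod : (1 : ℕ) % m = 1 := Nat.mod_eq_of_lt (by omega)
    rw [hmod] at h2
    rcases gSeq_eq_vgen h2 with ⟨h, -⟩ | ⟨-, rfl⟩
    · omega
    · exact ⟨rfl, rfl, rfl⟩
  · have hmod : (2 : ℕ) % m = 2 := Nat.mod_eq_of_lt (by omega)
    rw [hmod] at h2
    rcases gSeq_eq_vgen h2 with ⟨h, -⟩ | ⟨h, -⟩ <;> omega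

end Aux
section Adj
open GammaGen

variable {ι : Type*} {E : ι → ι → Prop} {lab : ι → ι → ℕ}

lemma adj_cases {u v : GammaVert ι} (h : (LinkGamma E lab).Adj u v) :
    ∃ i j k, E i j ∧ 1 ≤ k ∧ k ≤ lab i j ∧
      (((u = (gSeq i j k, true) ∧ v = (gSeq i j (k % lab i j + 1), false)) ∨
        (v = (gSeq i j k, true) ∧ u = (gSeq i j (k % lab i j + 1), false))) ∨
       ((u = (.xgen i j, false) ∧ v = (gSeq i j k, false)) ∨
        (v = (.xgen i j, false) ∧ u = (gSeq i j k, false))) ∨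
       ((u = (gSeq i j (k % lab i j + 1), true) ∧ v = (.xgen i j, true)) ∨
        (v = (gSeq i j (k % lab i j + 1), true) ∧ u = (.xgen i j, true)))) := by
  rw [LinkGamma, SimpleGraph.fromRel_adj] at h
  obtain ⟨-, h | h⟩ := h <;>
  · obtain ⟨t, ht, hc⟩ := h
    simp only [relTriplesGamma, Set.mem_setOf_eq] at ht
    obtain ⟨i, j, hE, k, hk1, hk2, rfl⟩ := ht
    refine ⟨i, j, k, hE, hk1, hk2, ?_⟩
    simp only [Prod.mk.injEq] at hc
    tauto

lemma adj_xgen_false {i j : ι} {u : GammaVert ι}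
    (h : (LinkGamma E lab).Adj (.xgen i j, false) u) :
    E i j ∧ ∃ k, 1 ≤ k ∧ k ≤ lab i j ∧ u = (gSeq i j k, false) := by
  obtain ⟨i', j', k, hE, hk1, hk2, hc⟩ := adj_cases h
  rcases hc with (⟨h1, h2⟩ | ⟨h2, h1⟩) | (⟨h1, h2⟩ | ⟨h2, h1⟩) | (⟨h1, h2⟩ | ⟨h2, h1⟩) <;>
    simp only [Prod.mk.injEq, gSeq_ne_xgen, xgen_ne_gSeq, xgen.injEq,
      Bool.false_eq_true, Bool.true_eq_false, and_false, false_and, and_true, true_and] at h1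
  obtain ⟨rfl, rfl⟩ := h1
  exact ⟨hE, k, hk1, hk2, h2⟩

lemma adj_xgen_true {i j : ι} {u : GammaVert ι}
    (h : (LinkGamma E lab).Adj (.xgen i j, true) u) :
    E i j ∧ ∃ k, 1 ≤ k ∧ k ≤ lab i j ∧ u = (gSeq i j (k % lab i j + 1), true) := by
  obtain ⟨i', j', k, hE, hk1, hk2, hc⟩ := adj_cases h
  rcases hc with (⟨h1, h2⟩ | ⟨h2, h1⟩) | (⟨h1, h2⟩ | ⟨h2, h1⟩) | (⟨h1, h2⟩ | ⟨h2, h1⟩) <;>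
    simp only [Prod.mk.injEq, gSeq_ne_xgen, xgen_ne_gSeq, xgen.injEq,
      Bool.false_eq_true, Bool.true_eq_false, and_false, false_and, and_true, true_and] at h1
  obtain ⟨rfl, rfl⟩ := h1
  exact ⟨hE, k, hk1, hk2, h2⟩

lemma adj_nonx_false {g : GammaGen ι} {u : GammaVert ι} (hg : ∀ a b, g ≠ .xgen a b)
    (h : (LinkGamma E lab).Adj (g, false) u) :
    (∃ i j k, E i j ∧ 1 ≤ k ∧ k ≤ lab i j ∧
        g = gSeq i j (k % lab i j + 1) ∧ u = (gSeq i j k, true)) ∨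
    (∃ i j k, E i j ∧ 1 ≤ k ∧ k ≤ lab i j ∧
        g = gSeq i j k ∧ u = (.xgen i j, false)) := by
  obtain ⟨i', j', k, hE, hk1, hk2, hc⟩ := adj_cases h
  rcases hc with (⟨h1, h2⟩ | ⟨h2, h1⟩) | (⟨h1, h2⟩ | ⟨h2, h1⟩) | (⟨h1, h2⟩ | ⟨h2, h1⟩) <;>
    simp only [Prod.mk.injEq, Bool.false_eq_true, Bool.true_eq_false,
      and_false, false_and, and_true, true_and] at h1
  · exact Or.inl ⟨i', j', k, hE, hk1, hk2, h1, h2⟩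
  · exact absurd h1 (hg i' j')
  · exact Or.inr ⟨i', j', k, hE, hk1, hk2, h1, h2⟩

lemma adj_nonx_true {g : GammaGen ι} {u : GammaVert ι} (hg : ∀ a b, g ≠ .xgen a b)
    (h : (LinkGamma E lab).Adj (g, true) u) :
    (∃ i j k, E i j ∧ 1 ≤ k ∧ k ≤ lab i j ∧
        g = gSeq i j k ∧ u = (gSeq i j (k % lab i j + 1), false)) ∨
    (∃ i j k, E i j ∧ 1 ≤ k ∧ k ≤ lab i j ∧
        g = gSeq i j (k % lab i j + 1) ∧ u = (.xgen i j, true)) := by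
  obtain ⟨i', j', k, hE, hk1, hk2, hc⟩ := adj_cases h
  rcases hc with (⟨h1, h2⟩ | ⟨h2, h1⟩) | (⟨h1, h2⟩ | ⟨h2, h1⟩) | (⟨h1, h2⟩ | ⟨h2, h1⟩) <;>
    simp only [Prod.mk.injEq, Bool.false_eq_true, Bool.true_eq_false,
      and_false, false_and, and_true, true_and] at h1
  · exact Or.inl ⟨i', j', k, hE, hk1, hk2, h1, h2⟩
  · exact Or.inr ⟨i', j', k, hE, hk1, hk2, h1, h2⟩
  · exact absurd h1 (hg i' j')

end Adj
section Core
open GammaGen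

variable {ι : Type*} {E : ι → ι → Prop} {lab : ι → ι → ℕ}

lemma edge_clash {i j p q : ι} (hirr : ∀ i, ¬E i i) (hs : ∀ i j, E i j → ¬E j i)
    (hE : E i j) (hE1 : E p q) (hne : ¬(p = i ∧ q = j))
    (h1 : p = i ∨ p = j) (h2 : q = i ∨ q = j) : False := by
  rcases h1 with rfl | rfl <;> rcases h2 with rfl | rfl
  · exact hirr _ hE1
  · exact hne ⟨rfl, rfl⟩
  · exact hs _ _ hE hE1
  · exact hirr _ hE1

lemma coreX {i j i1 j1 : ι} {a b c d : ℕ}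
    (hirr : ∀ i, ¬E i i) (hs : ∀ i j, E i j → ¬E j i)
    (hE : E i j) (hE1 : E i1 j1) (hne1 : ¬(i1 = i ∧ j1 = j))
    (e1 : gSeq i j a = gSeq i1 j1 c) (e2 : gSeq i j b = gSeq i1 j1 d)
    (hg : gSeq i j a ≠ gSeq i j b) : False := by
  have hij : i ≠ j := fun h => hirr i (h ▸ hE)
  have hij1 : i1 ≠ j1 := fun h => hirr i1 (h ▸ hE1)
  rcases gSeq_eq_cases e1 with ⟨h1, h2, -⟩ | ⟨ha, hc⟩
  · exact hne1 ⟨h1.symm, h2.symm⟩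
  rcases gSeq_eq_cases e2 with ⟨h1, h2, -⟩ | ⟨hb, hd⟩
  · exact hne1 ⟨h1.symm, h2.symm⟩
  obtain ⟨t1, ht1, ht1m⟩ := vgen_of_small (i := i) (j := j) ha
  obtain ⟨t2, ht2, ht2m⟩ := vgen_of_small (i := i) (j := j) hb
  have m1 : t1 = i1 ∨ t1 = j1 := by
    rcases gSeq_eq_vgen (e1.symm.trans ht1) with ⟨-, h⟩ | ⟨-, h⟩
    exacts [Or.inl h, Or.inr h]
  have m2 : t2 = i1 ∨ t2 = j1 := by
    rcases gSeq_eq_vgen (e2.symm.trans ht2) with ⟨-, h⟩ | ⟨-, h⟩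
    exacts [Or.inl h, Or.inr h]
  have hne' : t1 ≠ t2 := fun h => hg (ht1.trans (h ▸ ht2.symm))
  rcases m1 with h1' | h1' <;> rcases m2 with h2' | h2'
  · exact hne' (h1'.trans h2'.symm)
  · exact edge_clash hirr hs hE hE1 hne1 (h1' ▸ ht1m) (h2' ▸ ht2m)
  · exact edge_clash hirr hs hE hE1 hne1 (h2' ▸ ht2m) (h1' ▸ ht1m)
  · exact hne' (h1'.trans h2'.symm)

end Core
section Core2
open GammaGen

variable {ι : Type*} {E : ι → ι → Prop} {lab : ι → ι → ℕ}

lemma coreA {i j i1 j1 i2 j2 : ι} {a b k1 k2 : ℕ}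
    (hirr : ∀ i, ¬E i i) (hs : ∀ i j, E i j → ¬E j i) (htf : TriangleFree E)
    (hE : E i j) (hE1 : E i1 j1) (hE2 : E i2 j2)
    (hm1 : 3 ≤ lab i1 j1) (hm2 : 3 ≤ lab i2 j2)
    (hk11 : 1 ≤ k1) (hk12 : k1 ≤ lab i1 j1) (hk21 : 1 ≤ k2) (hk22 : k2 ≤ lab i2 j2)
    (e1 : gSeq i j a = gSeq i1 j1 (k1 % lab i1 j1 + 1))
    (e2 : gSeq i j b = gSeq i2 j2 (k2 % lab i2 j2 + 1))
    (e3 : gSeq i1 j1 k1 = gSeq i2 j2 k2)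
    (hg : gSeq i j a ≠ gSeq i j b) : False := by
  have hij : i ≠ j := fun h => hirr i (h ▸ hE)
  have hij2 : i2 ≠ j2 := fun h => hirr i2 (h ▸ hE2)
  by_cases h1 : i1 = i ∧ j1 = j
  · rw [h1.1, h1.2] at e1 e3
    by_cases h2 : i2 = i ∧ j2 = j
    · rw [h2.1, h2.2] at e2 e3
      have hk : k1 = k2 := gSeq_inj hij e3
      rw [hk] at e1
      exact hg (e1.trans e2.symm)
    · rcases gSeq_eq_cases e3 with ⟨hh1, hh2, -⟩ | ⟨hk1s, hk2s⟩
      · exact h2 ⟨hh1.symm, hh2.symm⟩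
      rcases gSeq_eq_cases e2 with ⟨hh1, hh2, -⟩ | ⟨hbs, -⟩
      · exact h2 ⟨hh1.symm, hh2.symm⟩
      obtain ⟨s, hsv, hsm⟩ := vgen_of_small (i := i) (j := j) hk1s
      obtain ⟨t, htv, htm⟩ := vgen_of_small (i := i) (j := j) hbs
      have h2v : gSeq i2 j2 k2 = vgen s := e3.symm.trans hsv
      have h2v' : gSeq i2 j2 (k2 % lab i2 j2 + 1) = vgen t := e2.symm.trans htv
      obtain ⟨-, hsi, htj⟩ := both_vgen hm2 hk21 hk22 h2v h2v'
      exact edge_clash hirr hs hE hE2 h2 (hsi ▸ hsm) (htj ▸ htm)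
  · by_cases h2 : i2 = i ∧ j2 = j
    · rw [h2.1, h2.2] at e2 e3
      rcases gSeq_eq_cases e3 with ⟨hh1, hh2, -⟩ | ⟨hk1s, hk2s⟩
      · exact h1 ⟨hh1, hh2⟩
      rcases gSeq_eq_cases e1 with ⟨hh1, hh2, -⟩ | ⟨has, -⟩
      · exact h1 ⟨hh1.symm, hh2.symm⟩
      obtain ⟨s, hsv, hsm⟩ := vgen_of_small (i := i) (j := j) hk2s
      obtain ⟨t, htv, htm⟩ := vgen_of_small (i := i) (j := j) has
      have h1v : gSeq i1 j1 k1 = vgen s := e3.trans hsv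
      have h1v' : gSeq i1 j1 (k1 % lab i1 j1 + 1) = vgen t := e1.symm.trans htv
      obtain ⟨-, hsi, htj⟩ := both_vgen hm1 hk11 hk12 h1v h1v'
      exact edge_clash hirr hs hE hE1 h1 (hsi ▸ hsm) (htj ▸ htm)
    · by_cases h12 : i1 = i2 ∧ j1 = j2
      · rw [h12.1, h12.2] at e1 e3
        have hk : k1 = k2 := gSeq_inj hij2 e3
        rw [hk] at e1
        exact hg (e1.trans e2.symm)
      · rcases gSeq_eq_cases e1 with ⟨hh1, hh2, -⟩ | ⟨has, -⟩
        · exact h1 ⟨hh1.symm, hh2.symm⟩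
        rcases gSeq_eq_cases e2 with ⟨hh1, hh2, -⟩ | ⟨hbs, -⟩
        · exact h2 ⟨hh1.symm, hh2.symm⟩
        rcases gSeq_eq_cases e3 with ⟨hh1, hh2, -⟩ | ⟨hk1s, hk2s⟩
        · exact h12 ⟨hh1, hh2⟩
        obtain ⟨s0, hs0, hs0m⟩ := vgen_of_small (i := i2) (j := j2) hk2s
        have h1v : gSeq i1 j1 k1 = vgen s0 := e3.trans hs0
        obtain ⟨t1, ht1, ht1m⟩ := vgen_of_small (i := i) (j := j) has
        have h1v' : gSeq i1 j1 (k1 % lab i1 j1 + 1) = vgen t1 := e1.symm.trans ht1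
        obtain ⟨-, hsi1, htj1⟩ := both_vgen hm1 hk11 hk12 h1v h1v'
        obtain ⟨t2, ht2, ht2m⟩ := vgen_of_small (i := i) (j := j) hbs
        have h2v' : gSeq i2 j2 (k2 % lab i2 j2 + 1) = vgen t2 := e2.symm.trans ht2
        obtain ⟨-, hsi2, htj2⟩ := both_vgen hm2 hk21 hk22 hs0 h2v'
        have hii : i1 = i2 := hsi1.symm.trans hsi2
        have hj12 : j1 ≠ j2 := fun h => hg (by rw [ht1, ht2, htj1, htj2, h])
        have hj1m : j1 = i ∨ j1 = j := htj1 ▸ ht1m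
        have hj2m : j2 = i ∨ j2 = j := htj2 ▸ ht2m
        refine htf ⟨j1, j2, i1, hj12, ?_, ?_, ?_, ?_, ?_⟩
        · exact fun h => hirr i1 (by rw [h] at hE1; exact hE1)
        · exact fun h => hirr i1 (by rw [← hii, h] at hE2; exact hE2)
        · rcases hj1m with h' | h' <;> rcases hj2m with h'' | h''
          · exact absurd (h'.trans h''.symm) hj12
          · rw [h', h'']; exact Or.inl hE
          · rw [h', h'']; exact Or.inr hE
          · exact absurd (h'.trans h''.symm) hj12
        · exact Or.inr (by rw [hii]; exact hE2)
        · exact Or.inr hE1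

lemma coreB {i j i1 j1 i2 j2 : ι} {a b k1 k2 : ℕ}
    (hirr : ∀ i, ¬E i i) (hs : ∀ i j, E i j → ¬E j i) (htf : TriangleFree E)
    (hE : E i j) (hE1 : E i1 j1) (hE2 : E i2 j2)
    (hm1 : 3 ≤ lab i1 j1) (hm2 : 3 ≤ lab i2 j2)
    (hk11 : 1 ≤ k1) (hk12 : k1 ≤ lab i1 j1) (hk21 : 1 ≤ k2) (hk22 : k2 ≤ lab i2 j2)
    (e1 : gSeq i j a = gSeq i1 j1 k1)
    (e2 : gSeq i j b = gSeq i2 j2 k2)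
    (e3 : gSeq i1 j1 (k1 % lab i1 j1 + 1) = gSeq i2 j2 (k2 % lab i2 j2 + 1))
    (hg : gSeq i j a ≠ gSeq i j b) : False := by
  have hij : i ≠ j := fun h => hirr i (h ▸ hE)
  have hij2 : i2 ≠ j2 := fun h => hirr i2 (h ▸ hE2)
  by_cases h1 : i1 = i ∧ j1 = j
  · rw [h1.1, h1.2] at e1 e3 hk12
    by_cases h2 : i2 = i ∧ j2 = j
    · rw [h2.1, h2.2] at e2 e3 hk22
      have hk : k1 % lab i j + 1 = k2 % lab i j + 1 := gSeq_inj hij e3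
      have hkk : k1 = k2 := succ_inj hk11 hk12 hk21 hk22 hk
      rw [hkk] at e1
      exact hg (e1.trans e2.symm)
    · rcases gSeq_eq_cases e3 with ⟨hh1, hh2, -⟩ | ⟨hs1s, hs2s⟩
      · exact h2 ⟨hh1.symm, hh2.symm⟩
      rcases gSeq_eq_cases e2 with ⟨hh1, hh2, -⟩ | ⟨hbs, -⟩
      · exact h2 ⟨hh1.symm, hh2.symm⟩
      obtain ⟨t, htv, htm⟩ := vgen_of_small (i := i) (j := j) hbs
      obtain ⟨u, huv, hum⟩ := vgen_of_small (i := i) (j := j) hs1s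
      have h2v : gSeq i2 j2 k2 = vgen t := e2.symm.trans htv
      have h2v' : gSeq i2 j2 (k2 % lab i2 j2 + 1) = vgen u := e3.symm.trans huv
      obtain ⟨-, hti, huj⟩ := both_vgen hm2 hk21 hk22 h2v h2v'
      exact edge_clash hirr hs hE hE2 h2 (hti ▸ htm) (huj ▸ hum)
  · by_cases h2 : i2 = i ∧ j2 = j
    · rw [h2.1, h2.2] at e2 e3 hk22
      rcases gSeq_eq_cases e3 with ⟨hh1, hh2, -⟩ | ⟨hs1s, hs2s⟩
      · exact h1 ⟨hh1, hh2⟩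
      rcases gSeq_eq_cases e1 with ⟨hh1, hh2, -⟩ | ⟨has, -⟩
      · exact h1 ⟨hh1.symm, hh2.symm⟩
      obtain ⟨t, htv, htm⟩ := vgen_of_small (i := i) (j := j) has
      obtain ⟨u, huv, hum⟩ := vgen_of_small (i := i) (j := j) hs2s
      have h1v : gSeq i1 j1 k1 = vgen t := e1.symm.trans htv
      have h1v' : gSeq i1 j1 (k1 % lab i1 j1 + 1) = vgen u := e3.trans huv
      obtain ⟨-, hti, huj⟩ := both_vgen hm1 hk11 hk12 h1v h1v'
      exact edge_clash hirr hs hE hE1 h1 (hti ▸ htm) (huj ▸ hum)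
    · by_cases h12 : i1 = i2 ∧ j1 = j2
      · rw [h12.1, h12.2] at e1 e3 hk12
        have hk : k1 % lab i2 j2 + 1 = k2 % lab i2 j2 + 1 := gSeq_inj hij2 e3
        have hkk : k1 = k2 := succ_inj hk11 hk12 hk21 hk22 hk
        rw [hkk] at e1
        exact hg (e1.trans e2.symm)
      · rcases gSeq_eq_cases e1 with ⟨hh1, hh2, -⟩ | ⟨has, -⟩
        · exact h1 ⟨hh1.symm, hh2.symm⟩
        rcases gSeq_eq_cases e2 with ⟨hh1, hh2, -⟩ | ⟨hbs, -⟩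
        · exact h2 ⟨hh1.symm, hh2.symm⟩
        rcases gSeq_eq_cases e3 with ⟨hh1, hh2, -⟩ | ⟨hs1s, hs2s⟩
        · exact h12 ⟨hh1, hh2⟩
        obtain ⟨t1, ht1, ht1m⟩ := vgen_of_small (i := i) (j := j) has
        have h1v : gSeq i1 j1 k1 = vgen t1 := e1.symm.trans ht1
        obtain ⟨u, huv, hum⟩ := vgen_of_small (i := i2) (j := j2) hs2s
        have h1v' : gSeq i1 j1 (k1 % lab i1 j1 + 1) = vgen u := e3.trans huv
        obtain ⟨-, ht1i, huj1⟩ := both_vgen hm1 hk11 hk12 h1v h1v'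
        obtain ⟨t2, ht2, ht2m⟩ := vgen_of_small (i := i) (j := j) hbs
        have h2v : gSeq i2 j2 k2 = vgen t2 := e2.symm.trans ht2
        obtain ⟨-, ht2i, huj2⟩ := both_vgen hm2 hk21 hk22 h2v huv
        have hjj : j1 = j2 := huj1.symm.trans huj2
        have hi12 : i1 ≠ i2 := fun h => hg (by rw [ht1, ht2, ht1i, ht2i, h])
        have hi1m : i1 = i ∨ i1 = j := ht1i ▸ ht1m
        have hi2m : i2 = i ∨ i2 = j := ht2i ▸ ht2m
        refine htf ⟨i1, i2, j1, hi12, ?_, ?_, ?_, ?_, ?_⟩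
        · exact fun h => hirr j1 (by rw [h] at hE1; exact hE1)
        · exact fun h => hirr j1 (by rw [← hjj, h] at hE2; exact hE2)
        · rcases hi1m with h' | h' <;> rcases hi2m with h'' | h''
          · exact absurd (h'.trans h''.symm) hi12
          · rw [h', h'']; exact Or.inl hE
          · rw [h', h'']; exact Or.inr hE
          · exact absurd (h'.trans h''.symm) hi12
        · exact Or.inl (by rw [hjj]; exact hE2)
        · exact Or.inl hE1

end Core2
section Main
open GammaGen

variable {ι : Type*} {E : ι → ι → Prop} {lab : ι → ι → ℕ}

lemma no_xgen_v0
    (hirr : ∀ i, ¬E i i) (hs : ∀ i j, E i j → ¬E j i)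
    (hlab : ∀ i j, E i j → 3 ≤ lab i j) (htf : TriangleFree E)
    {v0 v1 v2 v3 : GammaVert ι}
    (a01 : (LinkGamma E lab).Adj v0 v1) (a12 : (LinkGamma E lab).Adj v1 v2)
    (a23 : (LinkGamma E lab).Adj v2 v3) (a30 : (LinkGamma E lab).Adj v3 v0)
    (d02 : v0 ≠ v2) (d13 : v1 ≠ v3) :
    ∀ p q, v0.1 ≠ .xgen p q := by
  intro p q hpq
  obtain ⟨g0, bb⟩ := v0
  simp only at hpq
  subst hpq
  cases bb with
  | false =>
    obtain ⟨hE, a, ha1, ha2, rfl⟩ := adj_xgen_false a01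
    obtain ⟨-, b, hb1, hb2, rfl⟩ := adj_xgen_false a30.symm
    have hg : gSeq p q a ≠ gSeq p q b := fun h => d13 (by rw [h])
    rcases adj_nonx_false (fun c d => gSeq_ne_xgen p q c d a) a12 with
        ⟨i1, j1, k1, hE1, hk11, hk12, hq1, rfl⟩ |
        ⟨i1, j1, c, hE1, hc1, hc2, hq1, rfl⟩
    · rcases adj_nonx_true (fun c d => gSeq_ne_xgen i1 j1 c d k1) a23 with
          ⟨i2, j2, k2, hE2, hk21, hk22, hq2, hv3⟩ |
          ⟨i2, j2, k2, hE2, hk21, hk22, hq2, hv3⟩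
      · have e2 : gSeq p q b = gSeq i2 j2 (k2 % lab i2 j2 + 1) :=
          congrArg Prod.fst hv3
        exact coreA hirr hs htf hE hE1 hE2 (hlab _ _ hE1) (hlab _ _ hE2)
          hk11 hk12 hk21 hk22 hq1 e2 hq2 hg
      · exact absurd (congrArg Prod.snd hv3) (by simp)
    · have hne1 : ¬(i1 = p ∧ j1 = q) := by
        rintro ⟨rfl, rfl⟩; exact d02 rfl
      obtain ⟨-, d', hd1, hd2, hv3⟩ := adj_xgen_false a23
      have e2 : gSeq p q b = gSeq i1 j1 d' := congrArg Prod.fst hv3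
      exact coreX hirr hs hE hE1 hne1 hq1 e2 hg
  | true =>
    obtain ⟨hE, a, ha1, ha2, rfl⟩ := adj_xgen_true a01
    obtain ⟨-, b, hb1, hb2, rfl⟩ := adj_xgen_true a30.symm
    obtain ⟨ha1', ha2'⟩ := succ_bounds ha1 ha2
    obtain ⟨hb1', hb2'⟩ := succ_bounds hb1 hb2
    have hg : gSeq p q (a % lab p q + 1) ≠ gSeq p q (b % lab p q + 1) :=
      fun h => d13 (by rw [h])
    rcases adj_nonx_true (fun c d => gSeq_ne_xgen p q c d _) a12 with
        ⟨i1, j1, k1, hE1, hk11, hk12, hq1, rfl⟩ |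
        ⟨i1, j1, c, hE1, hc1, hc2, hq1, rfl⟩
    · rcases adj_nonx_false (fun c d => gSeq_ne_xgen i1 j1 c d _) a23 with
          ⟨i2, j2, k2, hE2, hk21, hk22, hq2, hv3⟩ |
          ⟨i2, j2, k2, hE2, hk21, hk22, hq2, hv3⟩
      · have e2 : gSeq p q (b % lab p q + 1) = gSeq i2 j2 k2 :=
          congrArg Prod.fst hv3
        exact coreB hirr hs htf hE hE1 hE2 (hlab _ _ hE1) (hlab _ _ hE2)
          hk11 hk12 hk21 hk22 hq1 e2 hq2 hg
      · exact absurd (congrArg Prod.snd hv3) (by simp)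
    · have hne1 : ¬(i1 = p ∧ j1 = q) := by
        rintro ⟨rfl, rfl⟩; exact d02 rfl
      obtain ⟨-, d', hd1, hd2, hv3⟩ := adj_xgen_true a23
      have e2 : gSeq p q (b % lab p q + 1) = gSeq i1 j1 (d' % lab i1 j1 + 1) :=
        congrArg Prod.fst hv3
      exact coreX hirr hs hE hE1 hne1 hq1 e2 hg

lemma lvl_true {g : GammaGen ι} (h : ∀ a b, g ≠ .xgen a b) :
    lvlGamma (g, true) = 2 := by
  cases g with
  | xgen a b => exact absurd rfl (h a b)
  | vgen i => rfl
  | dgen i j k => rfl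

lemma lvl_false {g : GammaGen ι} (h : ∀ a b, g ≠ .xgen a b) :
    lvlGamma (g, false) = 3 := by
  cases g with
  | xgen a b => exact absurd rfl (h a b)
  | vgen i => rfl
  | dgen i j k => rfl

lemma adj_middle {u v : GammaVert ι} (h : (LinkGamma E lab).Adj u v)
    (hu : ∀ a b, u.1 ≠ .xgen a b) (hv : ∀ a b, v.1 ≠ .xgen a b) :
    IsMiddle u v := by
  obtain ⟨i, j, k, -, -, -, hc⟩ := adj_cases h
  rcases hc with (⟨rfl, rfl⟩ | ⟨rfl, rfl⟩) | (⟨rfl, -⟩ | ⟨rfl, -⟩) | (⟨-, rfl⟩ | ⟨-, rfl⟩)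
  · exact Or.inl ⟨lvl_true (fun a b => gSeq_ne_xgen i j a b k),
      lvl_false (fun a b => gSeq_ne_xgen i j a b _)⟩
  · exact Or.inr ⟨lvl_false (fun a b => gSeq_ne_xgen i j a b _),
      lvl_true (fun a b => gSeq_ne_xgen i j a b k)⟩
  · exact absurd rfl (hu i j)
  · exact absurd rfl (hv i j)
  · exact absurd rfl (hv i j)
  · exact absurd rfl (hu i j)

end Main
/-- If `Γ` is a finite directed simple graph with edge labels at least 3
and no triangles, then every embedded cycle of length 4 in `L_Γ` consists entirely of
middle edges. -/
theorem four_cycles_all_middle {ι : Type*} [Fintype ι] [DecidableEq ι]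
    (E : ι → ι → Prop) (lab : ι → ι → ℕ)
    (hirr : ∀ i, ¬E i i) (hsimple : ∀ i j, E i j → ¬E j i)
    (hlab : ∀ i j, E i j → 3 ≤ lab i j) (htf : TriangleFree E) :
    ∀ (v : GammaVert ι) (w : (LinkGamma E lab).Walk v v),
      w.IsCycle → w.length = 4 →
        ∀ d ∈ w.darts, IsMiddle d.toProd.1 d.toProd.2 := by
  intro v w hc hlen
  cases w with
  | nil => simp at hlen
  | @cons _ b1 _ h1 p =>
  cases p with
  | nil => simp at hlen
  | @cons _ b2 _ h2 p =>
  cases p with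
  | nil => simp at hlen
  | @cons _ b3 _ h3 p =>
  cases p with
  | nil => simp at hlen
  | @cons _ b4 _ h4 p =>
  cases p with
  | cons h5 p => simp [SimpleGraph.Walk.length_cons] at hlen
  | nil =>
  have hnd := hc.support_nodup
  simp only [SimpleGraph.Walk.support_cons, SimpleGraph.Walk.support_nil,
    List.tail_cons, List.nodup_cons, List.mem_cons, List.mem_singleton,
    List.not_mem_nil, or_false, List.nodup_nil, and_true] at hnd
  push_neg at hnd
  obtain ⟨⟨h12', h13', h1v⟩, ⟨h23', h2v⟩, h3v⟩ := hnd
  have d02 : v ≠ b2 := fun h => h2v (h.symm)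
  have d13 : b1 ≠ b3 := h13'
  have nx0 := no_xgen_v0 hirr hsimple hlab htf h1 h2 h3 h4 d02 d13
  have nx1 := no_xgen_v0 hirr hsimple hlab htf h2 h3 h4 h1 d13 h2v
  have nx2 := no_xgen_v0 hirr hsimple hlab htf h3 h4 h1 h2 h2v (fun h => d13 h.symm)
  have nx3 := no_xgen_v0 hirr hsimple hlab htf h4 h1 h2 h3 (fun h => d13 h.symm) d02
  intro d hd
  simp only [SimpleGraph.Walk.darts_cons, SimpleGraph.Walk.darts_nil,
    List.mem_cons, List.not_mem_nil, or_false] at hd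
  rcases hd with rfl | rfl | rfl | rfl
  · exact adj_middle h1 nx0 nx1
  · exact adj_middle h2 nx1 nx2
  · exact adj_middle h3 nx2 nx3
  · exact adj_middle h4 nx3 nx0
end

section
/- Let Γ be a finite triangle-free directed graph with edge labels ≥ 3. Assign length π/2 to each middle edge of L_Γ and length π/4 to each non-middle edge. Then every embedded cycle in L_Γ has total length at least 2π. -/
instance {ι : Type*} (u v : GammaVert ι) : Decidable (IsMiddle u v) := by
  unfold IsMiddle; infer_instance

/-- The length of a link edge in the metric coming from right isoceles triangles:
`π/2` for middle edges and `π/4` for the other edges. -/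
noncomputable def edgeWeight {ι : Type*} (u v : GammaVert ι) : ℝ :=
  if IsMiddle u v then Real.pi / 2 else Real.pi / 4

-- ===================== helpers =====================
namespace GammaProof

open GammaGen

variable {ι : Type*}

def Menu (lab : ι → ι → ℕ) (i j : ι) (g : GammaGen ι) : Prop :=
  g = .vgen i ∨ g = .vgen j ∨ ∃ k, 3 ≤ k ∧ k ≤ lab i j ∧ g = .dgen i j k

def MEdge (E : ι → ι → Prop) (lab : ι → ι → ℕ) (g h : GammaGen ι) : Prop :=
  (∃ p q, E p q ∧ g = .vgen p ∧ h = .vgen q) ∨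
  (∃ p q, E p q ∧ g = .vgen q ∧ h = .dgen p q 3) ∨
  (∃ p q k, E p q ∧ 3 ≤ k ∧ k + 1 ≤ lab p q ∧ g = .dgen p q k ∧ h = .dgen p q (k + 1)) ∨
  (∃ p q, E p q ∧ g = .dgen p q (lab p q) ∧ h = .vgen p)

lemma menu_gSeq {lab : ι → ι → ℕ} {i j : ι} {k : ℕ} (h1 : 1 ≤ k) (h2 : k ≤ lab i j) :
    Menu lab i j (gSeq i j k) := by
  unfold gSeq Menu
  split_ifs with e1 e2
  · exact Or.inl rfl
  · exact Or.inr (Or.inl rfl)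
  · exact Or.inr (Or.inr ⟨k, by omega, h2, rfl⟩)

lemma menu_succ_gSeq {lab : ι → ι → ℕ} {i j : ι} {k : ℕ} (h1 : 1 ≤ k) (h2 : k ≤ lab i j) :
    Menu lab i j (gSeq i j (k % lab i j + 1)) := by
  have hm : 0 < lab i j := by omega
  have := Nat.mod_lt k hm
  exact menu_gSeq (by omega) (by omega)

lemma medge_gSeq {E : ι → ι → Prop} {lab : ι → ι → ℕ} {i j : ι} {k : ℕ}
    (hE : E i j) (hm : 3 ≤ lab i j) (h1 : 1 ≤ k) (h2 : k ≤ lab i j) :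
    MEdge E lab (gSeq i j k) (gSeq i j (k % lab i j + 1)) := by
  rcases Nat.lt_or_ge k (lab i j) with hk | hk
  · rw [Nat.mod_eq_of_lt hk]
    match k, h1 with
    | 1, _ =>
      exact Or.inl ⟨i, j, hE, by simp [gSeq], by simp [gSeq]⟩
    | 2, _ =>
      exact Or.inr (Or.inl ⟨i, j, hE, by simp [gSeq], by simp [gSeq]⟩)
    | (k+3), _ =>
      refine Or.inr (Or.inr (Or.inl ⟨i, j, k+3, hE, by omega, by omega, ?_, ?_⟩))
      · simp [gSeq]
      · simp [gSeq]
  · have hkm : k = lab i j := by omega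
    subst hkm
    rw [Nat.mod_self]
    refine Or.inr (Or.inr (Or.inr ⟨i, j, hE, ?_, ?_⟩))
    · simp only [gSeq]; rw [if_neg (by omega), if_neg (by omega)]
    · simp [gSeq]

lemma linkRel_cases {E : ι → ι → Prop} {lab : ι → ι → ℕ} {u v : GammaVert ι}
    (h : linkRelGamma E lab u v) :
    ∃ i j k, E i j ∧ 1 ≤ k ∧ k ≤ lab i j ∧
      ((u, v) = ((gSeq i j k, true), (gSeq i j (k % lab i j + 1), false)) ∨
       (u, v) = ((.xgen i j, false), (gSeq i j k, false)) ∨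
       (u, v) = ((gSeq i j (k % lab i j + 1), true), (.xgen i j, true))) := by
  obtain ⟨t, ⟨i, j, hE, k, hk1, hk2, ht⟩, hc⟩ := h
  subst ht
  exact ⟨i, j, k, hE, hk1, hk2, by simpa using hc⟩

lemma adj_class {E : ι → ι → Prop} {lab : ι → ι → ℕ}
    (hlab : ∀ i j, E i j → 3 ≤ lab i j) {u v : GammaVert ι}
    (h : (LinkGamma E lab).Adj u v) :
    ∃ w z : GammaVert ι, ((u, v) = (w, z) ∨ (u, v) = (z, w)) ∧
      ((∃ g h', MEdge E lab g h' ∧ w = (g, true) ∧ z = (h', false)) ∨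
       (∃ i j g, E i j ∧ Menu lab i j g ∧ w = (.xgen i j, false) ∧ z = (g, false)) ∨
       (∃ i j g, E i j ∧ Menu lab i j g ∧ w = (g, true) ∧ z = (.xgen i j, true))) := by
  rw [LinkGamma, SimpleGraph.fromRel_adj] at h
  obtain ⟨hne, h | h⟩ := h
  · obtain ⟨i, j, k, hE, h1, h2, hc | hc | hc⟩ := linkRel_cases h
    · exact ⟨_, _, Or.inl hc, Or.inl ⟨_, _, medge_gSeq hE (hlab _ _ hE) h1 h2, rfl, rfl⟩⟩
    · exact ⟨_, _, Or.inl hc, Or.inr (Or.inl ⟨i, j, _, hE, menu_gSeq h1 h2, rfl, rfl⟩)⟩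
    · exact ⟨_, _, Or.inl hc, Or.inr (Or.inr ⟨i, j, _, hE, menu_succ_gSeq h1 h2, rfl, rfl⟩)⟩
  · obtain ⟨i, j, k, hE, h1, h2, hc | hc | hc⟩ := linkRel_cases h
    all_goals rw [Prod.mk.injEq] at hc; obtain ⟨rfl, rfl⟩ := hc
    · exact ⟨_, _, Or.inr rfl, Or.inl ⟨_, _, medge_gSeq hE (hlab _ _ hE) h1 h2, rfl, rfl⟩⟩
    · exact ⟨_, _, Or.inr rfl, Or.inr (Or.inl ⟨i, j, _, hE, menu_gSeq h1 h2, rfl, rfl⟩)⟩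
    · exact ⟨_, _, Or.inr rfl, Or.inr (Or.inr ⟨i, j, _, hE, menu_succ_gSeq h1 h2, rfl, rfl⟩)⟩
-- appended inside namespace GammaProof
variable {E : ι → ι → Prop} {lab : ι → ι → ℕ}

lemma menu_nonx {i j p q : ι} {g : GammaGen ι} (h : Menu lab i j g) :
    g ≠ .xgen p q := by
  rcases h with rfl | rfl | ⟨k, _, _, rfl⟩ <;> simp

lemma medge_nonx_left {p q : ι} {g h : GammaGen ι} (hm : MEdge E lab g h) :
    g ≠ .xgen p q := by
  rcases hm with ⟨a, b, _, rfl, _⟩ | ⟨a, b, _, rfl, _⟩ | ⟨a, b, k, _, _, _, rfl, _⟩ | ⟨a, b, _, rfl, _⟩ <;> simp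

lemma medge_nonx_right {p q : ι} {g h : GammaGen ι} (hm : MEdge E lab g h) :
    h ≠ .xgen p q := by
  rcases hm with ⟨a, b, _, _, rfl⟩ | ⟨a, b, _, _, rfl⟩ | ⟨a, b, k, _, _, _, _, rfl⟩ | ⟨a, b, _, _, rfl⟩ <;> simp

lemma adj_xgen_true {i j : ι} {v : GammaVert ι}
    (hlab : ∀ i j, E i j → 3 ≤ lab i j)
    (h : (LinkGamma E lab).Adj (.xgen i j, true) v) :
    E i j ∧ ∃ g, Menu lab i j g ∧ v = (g, true) := by
  obtain ⟨w, z, hor, hty⟩ := adj_class hlab h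
  rcases hty with ⟨g, h', hM, rfl, rfl⟩ | ⟨p, q, g, hE, hMn, rfl, rfl⟩ | ⟨p, q, g, hE, hMn, rfl, rfl⟩ <;>
    rcases hor with heq | heq <;> rw [Prod.mk.injEq, Prod.mk.injEq] at heq
  · exact absurd heq.1.1.symm (medge_nonx_left hM)
  · simp at heq
  · simp at heq
  · simp at heq
  · obtain ⟨⟨h1, _⟩, h2⟩ := heq
    exact absurd h1.symm (menu_nonx hMn)
  · obtain ⟨⟨h1, _⟩, h2⟩ := heq
    injection h1 with e1 e2
    subst e1; subst e2
    exact ⟨hE, g, hMn, h2⟩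

lemma adj_xgen_false {i j : ι} {v : GammaVert ι}
    (hlab : ∀ i j, E i j → 3 ≤ lab i j)
    (h : (LinkGamma E lab).Adj (.xgen i j, false) v) :
    E i j ∧ ∃ g, Menu lab i j g ∧ v = (g, false) := by
  obtain ⟨w, z, hor, hty⟩ := adj_class hlab h
  rcases hty with ⟨g, h', hM, rfl, rfl⟩ | ⟨p, q, g, hE, hMn, rfl, rfl⟩ | ⟨p, q, g, hE, hMn, rfl, rfl⟩ <;>
    rcases hor with heq | heq <;> rw [Prod.mk.injEq, Prod.mk.injEq] at heq
  · simp at heq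
  · exact absurd heq.1.1.symm (medge_nonx_right hM)
  · obtain ⟨⟨h1, _⟩, h2⟩ := heq
    injection h1 with e1 e2
    subst e1; subst e2
    exact ⟨hE, g, hMn, h2⟩
  · obtain ⟨⟨h1, _⟩, h2⟩ := heq
    exact absurd h1.symm (menu_nonx hMn)
  · simp at heq
  · simp at heq

lemma adj_nonx_true {g : GammaGen ι} {v : GammaVert ι}
    (hlab : ∀ i j, E i j → 3 ≤ lab i j)
    (hg : ∀ p q, g ≠ .xgen p q)
    (h : (LinkGamma E lab).Adj (g, true) v) :
    (∃ i j, E i j ∧ Menu lab i j g ∧ v = (.xgen i j, true)) ∨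
    (∃ h', MEdge E lab g h' ∧ v = (h', false)) := by
  obtain ⟨w, z, hor, hty⟩ := adj_class hlab h
  rcases hty with ⟨g', h', hM, rfl, rfl⟩ | ⟨p, q, g', hE, hMn, rfl, rfl⟩ | ⟨p, q, g', hE, hMn, rfl, rfl⟩ <;>
    rcases hor with heq | heq <;> rw [Prod.mk.injEq, Prod.mk.injEq] at heq
  · obtain ⟨⟨h1, _⟩, h2⟩ := heq
    subst h1
    exact Or.inr ⟨h', hM, h2⟩
  · simp at heq
  · simp at heq
  · simp at heq
  · obtain ⟨⟨h1, _⟩, h2⟩ := heq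
    subst h1
    exact Or.inl ⟨p, q, hE, hMn, h2⟩
  · obtain ⟨⟨h1, _⟩, h2⟩ := heq
    exact absurd h1 (hg _ _)

lemma adj_nonx_false {g : GammaGen ι} {v : GammaVert ι}
    (hlab : ∀ i j, E i j → 3 ≤ lab i j)
    (hg : ∀ p q, g ≠ .xgen p q)
    (h : (LinkGamma E lab).Adj (g, false) v) :
    (∃ i j, E i j ∧ Menu lab i j g ∧ v = (.xgen i j, false)) ∨
    (∃ h', MEdge E lab h' g ∧ v = (h', true)) := by
  obtain ⟨w, z, hor, hty⟩ := adj_class hlab h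
  rcases hty with ⟨g', h', hM, rfl, rfl⟩ | ⟨p, q, g', hE, hMn, rfl, rfl⟩ | ⟨p, q, g', hE, hMn, rfl, rfl⟩ <;>
    rcases hor with heq | heq <;> rw [Prod.mk.injEq, Prod.mk.injEq] at heq
  · simp at heq
  · obtain ⟨⟨h1, _⟩, h2⟩ := heq
    subst h1
    exact Or.inr ⟨g', hM, h2⟩
  · obtain ⟨⟨h1, _⟩, h2⟩ := heq
    exact absurd h1 (hg _ _)
  · obtain ⟨⟨h1, _⟩, h2⟩ := heq
    subst h1
    exact Or.inl ⟨p, q, hE, hMn, h2⟩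
  · simp at heq
  · simp at heq

lemma lvl_nonx {g : GammaGen ι} (hg : ∀ p q, g ≠ .xgen p q) (b : Bool) :
    lvlGamma (g, b) = if b then 2 else 3 := by
  cases g with
  | xgen p q => exact absurd rfl (hg p q)
  | vgen t => cases b <;> rfl
  | dgen p q k => cases b <;> rfl

lemma lvl_xgen (i j : ι) (b : Bool) :
    lvlGamma ((.xgen i j : GammaGen ι), b) = if b then 1 else 4 := by
  cases b <;> rfl

lemma lvl_nonx_true {g : GammaGen ι} (hg : ∀ p q, g ≠ .xgen p q) :
    lvlGamma (g, true) = 2 := by rw [lvl_nonx hg]; rfl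

lemma lvl_nonx_false {g : GammaGen ι} (hg : ∀ p q, g ≠ .xgen p q) :
    lvlGamma (g, false) = 3 := by rw [lvl_nonx hg]; rfl

lemma weight_adj (hlab : ∀ i j, E i j → 3 ≤ lab i j) {u v : GammaVert ι}
    (h : (LinkGamma E lab).Adj u v) :
    edgeWeight u v = if u.2 = v.2 then Real.pi / 4 else Real.pi / 2 := by
  obtain ⟨w, z, hor, hty⟩ := adj_class hlab h
  rcases hty with ⟨g, h', hM, rfl, rfl⟩ | ⟨p, q, g, hE, hMn, rfl, rfl⟩ | ⟨p, q, g, hE, hMn, rfl, rfl⟩ <;>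
    rcases hor with heq | heq <;> rw [Prod.mk.injEq] at heq <;> obtain ⟨rfl, rfl⟩ := heq
  · have l1 := lvl_nonx_true (fun p q => medge_nonx_left (p := p) (q := q) hM)
    have l2 := lvl_nonx_false (fun p q => medge_nonx_right (p := p) (q := q) hM)
    rw [edgeWeight, if_pos (show IsMiddle _ _ from Or.inl ⟨l1, l2⟩)]
    simp
  · have l1 := lvl_nonx_true (fun p q => medge_nonx_left (p := p) (q := q) hM)
    have l2 := lvl_nonx_false (fun p q => medge_nonx_right (p := p) (q := q) hM)
    rw [edgeWeight, if_pos (show IsMiddle _ _ from Or.inr ⟨l2, l1⟩)]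
    simp
  · have l1 : lvlGamma ((GammaGen.xgen p q : GammaGen ι), false) = 4 := rfl
    have l2 := lvl_nonx_false (fun p' q' => menu_nonx (p := p') (q := q') hMn)
    rw [edgeWeight, if_neg (by rw [IsMiddle, l1, l2]; omega)]
    simp
  · have l1 : lvlGamma ((GammaGen.xgen p q : GammaGen ι), false) = 4 := rfl
    have l2 := lvl_nonx_false (fun p' q' => menu_nonx (p := p') (q := q') hMn)
    rw [edgeWeight, if_neg (by rw [IsMiddle, l1, l2]; omega)]
    simp
  · have l1 : lvlGamma ((GammaGen.xgen p q : GammaGen ι), true) = 1 := rfl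
    have l2 := lvl_nonx_true (fun p' q' => menu_nonx (p := p') (q := q') hMn)
    rw [edgeWeight, if_neg (by rw [IsMiddle, l1, l2]; omega)]
    simp
  · have l1 : lvlGamma ((GammaGen.xgen p q : GammaGen ι), true) = 1 := rfl
    have l2 := lvl_nonx_true (fun p' q' => menu_nonx (p := p') (q := q') hMn)
    rw [edgeWeight, if_neg (by rw [IsMiddle, l1, l2]; omega)]
    simp

lemma adj_lvl_parity (hlab : ∀ i j, E i j → 3 ≤ lab i j) {u v : GammaVert ι}
    (h : (LinkGamma E lab).Adj u v) :
    (lvlGamma u + lvlGamma v) % 2 = 1 := by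
  obtain ⟨w, z, hor, hty⟩ := adj_class hlab h
  rcases hty with ⟨g, h', hM, rfl, rfl⟩ | ⟨p, q, g, hE, hMn, rfl, rfl⟩ | ⟨p, q, g, hE, hMn, rfl, rfl⟩ <;>
    rcases hor with heq | heq <;> rw [Prod.mk.injEq] at heq <;> obtain ⟨rfl, rfl⟩ := heq
  · rw [lvl_nonx_true (fun p q => medge_nonx_left (p := p) (q := q) hM),
      lvl_nonx_false (fun p q => medge_nonx_right (p := p) (q := q) hM)]
  · rw [lvl_nonx_true (fun p q => medge_nonx_left (p := p) (q := q) hM),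
      lvl_nonx_false (fun p q => medge_nonx_right (p := p) (q := q) hM)]
  · rw [show lvlGamma ((GammaGen.xgen p q : GammaGen ι), false) = 4 from rfl,
      lvl_nonx_false (fun p' q' => menu_nonx (p := p') (q := q') hMn)]
  · rw [lvl_nonx_false (fun p' q' => menu_nonx (p := p') (q := q') hMn),
      show lvlGamma ((GammaGen.xgen p q : GammaGen ι), false) = 4 from rfl]
  · rw [lvl_nonx_true (fun p' q' => menu_nonx (p := p') (q := q') hMn),
      show lvlGamma ((GammaGen.xgen p q : GammaGen ι), true) = 1 from rfl]
  · rw [show lvlGamma ((GammaGen.xgen p q : GammaGen ι), true) = 1 from rfl,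
      lvl_nonx_true (fun p' q' => menu_nonx (p := p') (q := q') hMn)]

lemma walk_parity (hlab : ∀ i j, E i j → 3 ≤ lab i j) {u v : GammaVert ι}
    (p : (LinkGamma E lab).Walk u v) :
    (p.length + lvlGamma u + lvlGamma v) % 2 = 0 := by
  induction p with
  | nil => simp [SimpleGraph.Walk.length_nil]; omega
  | @cons a b c h q ih =>
      have := adj_lvl_parity hlab h
      rw [SimpleGraph.Walk.length_cons]
      omega

lemma menu_vgen {i j t : ι} (h : Menu lab i j (.vgen t)) : t = i ∨ t = j := by
  rcases h with h | h | ⟨k, _, _, h⟩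
  · injection h with e; exact Or.inl e
  · injection h with e; exact Or.inr e
  · exact absurd h (by simp)

lemma menu_dgen {i j a b : ι} {k : ℕ} (h : Menu lab i j (.dgen a b k)) :
    a = i ∧ b = j := by
  rcases h with h | h | ⟨k', _, _, h⟩
  · exact absurd h (by simp)
  · exact absurd h (by simp)
  · injection h with e1 e2 e3; exact ⟨e1, e2⟩

lemma pair_edge {i j t s : ι} (hE : E i j) (h1 : t = i ∨ t = j)
    (h2 : s = i ∨ s = j) (hts : t ≠ s) : E t s ∨ E s t := by
  rcases h1 with rfl | rfl <;> rcases h2 with rfl | rfl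
  · exact absurd rfl hts
  · exact Or.inl hE
  · exact Or.inr hE
  · exact absurd rfl hts

lemma menu_two {i j p q : ι} {g : GammaGen ι} (hne : ¬(i = p ∧ j = q))
    (h1 : Menu lab i j g) (h2 : Menu lab p q g) :
    ∃ t, g = .vgen t ∧ (t = i ∨ t = j) ∧ (t = p ∨ t = q) := by
  rcases h1 with rfl | rfl | ⟨k, _, _, rfl⟩
  · exact ⟨i, rfl, Or.inl rfl, menu_vgen h2⟩
  · exact ⟨j, rfl, Or.inr rfl, menu_vgen h2⟩
  · obtain ⟨rfl, rfl⟩ := menu_dgen h2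
    exact absurd ⟨rfl, rfl⟩ hne

lemma menu_menu (hirr : ∀ i, ¬E i i) (hsimple : ∀ i j, E i j → ¬E j i)
    {i j p q : ι} {g g' : GammaGen ι}
    (hE : E i j) (hE' : E p q) (hne : ¬(i = p ∧ j = q))
    (h1 : Menu lab i j g) (h2 : Menu lab p q g)
    (h1' : Menu lab i j g') (h2' : Menu lab p q g') (hgg : g ≠ g') : False := by
  obtain ⟨t, rfl, ht1, ht2⟩ := menu_two hne h1 h2
  obtain ⟨t', rfl, ht1', ht2'⟩ := menu_two hne h1' h2'
  have tne : t ≠ t' := fun e => hgg (by rw [e])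
  have e1 : (t = i ∧ t' = j) ∨ (t = j ∧ t' = i) := by
    rcases ht1 with rfl | rfl <;> rcases ht1' with h | h <;> simp_all
  have e2 : (t = p ∧ t' = q) ∨ (t = q ∧ t' = p) := by
    rcases ht2 with rfl | rfl <;> rcases ht2' with h | h <;> simp_all
  clear h1 h2 h1' h2' ht1 ht2 ht1' ht2' hgg
  rcases e1 with ⟨rfl, rfl⟩ | ⟨rfl, rfl⟩ <;> rcases e2 with ⟨f1, f2⟩ | ⟨f1, f2⟩ <;>
    subst f1 <;> subst f2
  · exact hne ⟨rfl, rfl⟩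
  · exact hsimple _ _ hE hE'
  · exact hsimple _ _ hE hE'
  · exact hne ⟨rfl, rfl⟩

lemma pred_pred (hirr : ∀ i, ¬E i i) (hsimple : ∀ i j, E i j → ¬E j i)
    (htf : TriangleFree E) {i j : ι} {g g' h : GammaGen ι}
    (hE : E i j) (h1 : MEdge E lab g h) (h2 : MEdge E lab g' h)
    (hm : Menu lab i j g) (hm' : Menu lab i j g') (hne : g ≠ g') : False := by
  rcases h1 with ⟨p, q, hpq, rfl, rfl⟩ | ⟨p, q, hpq, rfl, rfl⟩ |
    ⟨p, q, k, hpq, hk3, hkm, rfl, rfl⟩ | ⟨p, q, hpq, rfl, rfl⟩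
  · -- g = vgen p, h = vgen q, E p q
    rcases h2 with ⟨p', q', hpq', rfl, heq⟩ | ⟨p', q', hpq', rfl, heq⟩ |
      ⟨p', q', k', hpq', hk3', hkm', rfl, heq⟩ | ⟨p', q', hpq', rfl, heq⟩
    · injection heq with e; subst e
      have hp := menu_vgen hm
      have hp' := menu_vgen hm'
      have hne' : p ≠ p' := fun e => hne (by rw [e])
      refine htf ⟨p, p', q, hne', ?_, ?_, pair_edge hE hp hp' hne', Or.inl hpq', Or.inl hpq⟩
      · intro e; subst e; exact hirr _ hpq
      · intro e; subst e; exact hirr _ hpq'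
    · exact absurd heq (by simp)
    · exact absurd heq (by simp)
    · injection heq with e; subst e
      obtain ⟨rfl, rfl⟩ := menu_dgen hm'
      rcases menu_vgen hm with rfl | rfl
      · exact hirr _ hpq
      · exact hsimple _ _ hE hpq
  · -- g = vgen q, h = dgen p q 3, E p q
    rcases h2 with ⟨p', q', hpq', rfl, heq⟩ | ⟨p', q', hpq', rfl, heq⟩ |
      ⟨p', q', k', hpq', hk3', hkm', rfl, heq⟩ | ⟨p', q', hpq', rfl, heq⟩
    · exact absurd heq (by simp)
    · injection heq with e1 e2 e3; subst e1; subst e2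
      exact hne rfl
    · injection heq with e1 e2 e3; omega
    · exact absurd heq (by simp)
  · -- g = dgen p q k, h = dgen p q (k+1)
    rcases h2 with ⟨p', q', hpq', rfl, heq⟩ | ⟨p', q', hpq', rfl, heq⟩ |
      ⟨p', q', k', hpq', hk3', hkm', rfl, heq⟩ | ⟨p', q', hpq', rfl, heq⟩
    · exact absurd heq (by simp)
    · injection heq with e1 e2 e3; omega
    · injection heq with e1 e2 e3; subst e1; subst e2
      have : k = k' := by omega
      subst this
      exact hne rfl
    · exact absurd heq (by simp)
  · -- g = dgen p q (lab p q), h = vgen p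
    rcases h2 with ⟨p', q', hpq', rfl, heq⟩ | ⟨p', q', hpq', rfl, heq⟩ |
      ⟨p', q', k', hpq', hk3', hkm', rfl, heq⟩ | ⟨p', q', hpq', rfl, heq⟩
    · injection heq with e; subst e
      obtain ⟨rfl, rfl⟩ := menu_dgen hm
      rcases menu_vgen hm' with rfl | rfl
      · exact hirr _ hpq'
      · exact hsimple _ _ hE hpq'
    · exact absurd heq (by simp)
    · exact absurd heq (by simp)
    · injection heq with e; subst e
      obtain ⟨rfl, rfl⟩ := menu_dgen hm
      obtain ⟨_, e2⟩ := menu_dgen hm'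
      exact hne (by rw [e2])

lemma succ_succ (hirr : ∀ i, ¬E i i) (hsimple : ∀ i j, E i j → ¬E j i)
    (htf : TriangleFree E) {i j : ι} {g g' h : GammaGen ι}
    (hE : E i j) (h1 : MEdge E lab h g) (h2 : MEdge E lab h g')
    (hm : Menu lab i j g) (hm' : Menu lab i j g') (hne : g ≠ g') : False := by
  rcases h1 with ⟨p, q, hpq, rfl, rfl⟩ | ⟨p, q, hpq, rfl, rfl⟩ |
    ⟨p, q, k, hpq, hk3, hkm, rfl, rfl⟩ | ⟨p, q, hpq, rfl, rfl⟩
  · -- h = vgen p, g = vgen q, E p q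
    rcases h2 with ⟨p', q', hpq', heq, rfl⟩ | ⟨p', q', hpq', heq, rfl⟩ |
      ⟨p', q', k', hpq', hk3', hkm', heq, rfl⟩ | ⟨p', q', hpq', heq, rfl⟩
    · injection heq with e; subst e
      have hq := menu_vgen hm
      have hq' := menu_vgen hm'
      have hne' : q ≠ q' := fun e => hne (by rw [e])
      refine htf ⟨q, q', p, hne', ?_, ?_, pair_edge hE hq hq' hne', Or.inr hpq', Or.inr hpq⟩
      · intro e; subst e; exact hirr _ hpq
      · intro e; subst e; exact hirr _ hpq'
    · injection heq with e; subst e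
      obtain ⟨rfl, rfl⟩ := menu_dgen hm'
      rcases menu_vgen hm with rfl | rfl
      · exact hsimple _ _ hE hpq
      · exact hirr _ hpq
    · exact absurd heq (by simp)
    · exact absurd heq (by simp)
  · -- h = vgen q, g = dgen p q 3, E p q
    rcases h2 with ⟨p', q', hpq', heq, rfl⟩ | ⟨p', q', hpq', heq, rfl⟩ |
      ⟨p', q', k', hpq', hk3', hkm', heq, rfl⟩ | ⟨p', q', hpq', heq, rfl⟩
    · injection heq with e; subst e
      obtain ⟨rfl, rfl⟩ := menu_dgen hm
      rcases menu_vgen hm' with rfl | rfl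
      · exact hsimple _ _ hE hpq'
      · exact hirr _ hpq'
    · injection heq with e; subst e
      obtain ⟨rfl, rfl⟩ := menu_dgen hm
      obtain ⟨e1, _⟩ := menu_dgen hm'
      exact hne (by rw [e1])
    · exact absurd heq (by simp)
    · exact absurd heq (by simp)
  · -- h = dgen p q k, g = dgen p q (k+1)
    rcases h2 with ⟨p', q', hpq', heq, rfl⟩ | ⟨p', q', hpq', heq, rfl⟩ |
      ⟨p', q', k', hpq', hk3', hkm', heq, rfl⟩ | ⟨p', q', hpq', heq, rfl⟩
    · exact absurd heq (by simp)
    · exact absurd heq (by simp)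
    · injection heq with e1 e2 e3; subst e1; subst e2
      have : k = k' := by omega
      subst this
      exact hne rfl
    · injection heq with e1 e2 e3; subst e1; subst e2
      omega
  · -- h = dgen p q (lab p q), g = vgen p
    rcases h2 with ⟨p', q', hpq', heq, rfl⟩ | ⟨p', q', hpq', heq, rfl⟩ |
      ⟨p', q', k', hpq', hk3', hkm', heq, rfl⟩ | ⟨p', q', hpq', heq, rfl⟩
    · exact absurd heq (by simp)
    · exact absurd heq (by simp)
    · injection heq with e1 e2 e3; subst e1; subst e2
      omega
    · injection heq with e1 e2 e3; subst e1; subst e2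
      exact hne rfl

lemma core4H (hirr : ∀ i, ¬E i i) (hsimple : ∀ i j, E i j → ¬E j i)
    (htf : TriangleFree E) (hlab : ∀ i j, E i j → 3 ≤ lab i j)
    {i j : ι} {b c d : GammaVert ι}
    (h1 : (LinkGamma E lab).Adj (.xgen i j, true) b)
    (h2 : (LinkGamma E lab).Adj b c) (h3 : (LinkGamma E lab).Adj c d)
    (h4 : (LinkGamma E lab).Adj d (.xgen i j, true))
    (hac : c ≠ (.xgen i j, true)) (hbd : b ≠ d) : False := by
  obtain ⟨hE, g, hmg, rfl⟩ := adj_xgen_true hlab h1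
  obtain ⟨-, g', hmg', rfl⟩ := adj_xgen_true hlab h4.symm
  have hgg : g ≠ g' := fun e => hbd (by rw [e])
  rcases adj_nonx_true hlab (fun p q => menu_nonx hmg) h2 with
    ⟨p, q, hE', hmg2, rfl⟩ | ⟨h', hM, rfl⟩
  · obtain ⟨-, g'', hmg'', heq⟩ := adj_xgen_true hlab h3
    rw [Prod.mk.injEq] at heq
    obtain ⟨e, -⟩ := heq
    rw [← e] at hmg''
    by_cases hpq : i = p ∧ j = q
    · obtain ⟨rfl, rfl⟩ := hpq
      exact hac rfl
    · exact menu_menu hirr hsimple hE hE' hpq hmg hmg2 hmg' hmg'' hgg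
  · rcases adj_nonx_false hlab (fun p q => medge_nonx_right hM) h3 with
      ⟨p, q, -, -, heq⟩ | ⟨h'', hM2, heq⟩
    · simp at heq
    · rw [Prod.mk.injEq] at heq
      obtain ⟨e, -⟩ := heq
      rw [← e] at hM2
      exact pred_pred hirr hsimple htf hE hM hM2 hmg hmg' hgg

lemma core4L (hirr : ∀ i, ¬E i i) (hsimple : ∀ i j, E i j → ¬E j i)
    (htf : TriangleFree E) (hlab : ∀ i j, E i j → 3 ≤ lab i j)
    {i j : ι} {b c d : GammaVert ι}
    (h1 : (LinkGamma E lab).Adj (.xgen i j, false) b)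
    (h2 : (LinkGamma E lab).Adj b c) (h3 : (LinkGamma E lab).Adj c d)
    (h4 : (LinkGamma E lab).Adj d (.xgen i j, false))
    (hac : c ≠ (.xgen i j, false)) (hbd : b ≠ d) : False := by
  obtain ⟨hE, g, hmg, rfl⟩ := adj_xgen_false hlab h1
  obtain ⟨-, g', hmg', rfl⟩ := adj_xgen_false hlab h4.symm
  have hgg : g ≠ g' := fun e => hbd (by rw [e])
  rcases adj_nonx_false hlab (fun p q => menu_nonx hmg) h2 with
    ⟨p, q, hE', hmg2, rfl⟩ | ⟨h', hM, rfl⟩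
  · obtain ⟨-, g'', hmg'', heq⟩ := adj_xgen_false hlab h3
    rw [Prod.mk.injEq] at heq
    obtain ⟨e, -⟩ := heq
    rw [← e] at hmg''
    by_cases hpq : i = p ∧ j = q
    · obtain ⟨rfl, rfl⟩ := hpq
      exact hac rfl
    · exact menu_menu hirr hsimple hE hE' hpq hmg hmg2 hmg' hmg'' hgg
  · rcases adj_nonx_true hlab (fun p q => medge_nonx_left hM) h3 with
      ⟨p, q, -, -, heq⟩ | ⟨h'', hM2, heq⟩
    · simp at heq
    · rw [Prod.mk.injEq] at heq
      obtain ⟨e, -⟩ := heq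
      rw [← e] at hM2
      exact succ_succ hirr hsimple htf hE hM hM2 hmg hmg' hgg

lemma four_cycle_ne (hirr : ∀ i, ¬E i i) (hsimple : ∀ i j, E i j → ¬E j i)
    (htf : TriangleFree E) (hlab : ∀ i j, E i j → 3 ≤ lab i j)
    {a b c d : GammaVert ι}
    (h1 : (LinkGamma E lab).Adj a b) (h2 : (LinkGamma E lab).Adj b c)
    (h3 : (LinkGamma E lab).Adj c d) (h4 : (LinkGamma E lab).Adj d a)
    (hac : a ≠ c) (hbd : b ≠ d) : a.2 ≠ b.2 := by
  intro heq
  obtain ⟨w, z, hor, hty⟩ := adj_class hlab h1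
  rcases hty with ⟨g, h', hM, rfl, rfl⟩ | ⟨p, q, g, hE, hMn, rfl, rfl⟩ | ⟨p, q, g, hE, hMn, rfl, rfl⟩ <;>
    rcases hor with he | he <;> rw [Prod.mk.injEq] at he <;> obtain ⟨rfl, rfl⟩ := he
  · simp at heq
  · simp at heq
  · -- a = (xgen p q, false), b = (g, false)
    exact core4L hirr hsimple htf hlab h1 h2 h3 h4 (fun e => hac e.symm) hbd
  · -- a = (g,false), b = (xgen p q, false)
    exact core4L hirr hsimple htf hlab h2 h3 h4 h1 (fun e => hbd e.symm) (fun e => hac e.symm)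
  · -- a = (g, true), b = (xgen p q, true)
    exact core4H hirr hsimple htf hlab h2 h3 h4 h1 (fun e => hbd e.symm) (fun e => hac e.symm)
  · -- a = (xgen p q, true), b = (g, true)
    exact core4H hirr hsimple htf hlab h1 h2 h3 h4 (fun e => hac e.symm) hbd

lemma core6H_anchor (hirr : ∀ i, ¬E i i) (hsimple : ∀ i j, E i j → ¬E j i)
    (htf : TriangleFree E) (hlab : ∀ i j, E i j → 3 ≤ lab i j)
    {i1 j1 : ι} {v1 v2 v3 v4 v5 : GammaVert ι}
    (h1 : (LinkGamma E lab).Adj (.xgen i1 j1, true) v1)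
    (h2 : (LinkGamma E lab).Adj v1 v2) (h3 : (LinkGamma E lab).Adj v2 v3)
    (h4 : (LinkGamma E lab).Adj v3 v4) (h5 : (LinkGamma E lab).Adj v4 v5)
    (h6 : (LinkGamma E lab).Adj v5 (.xgen i1 j1, true))
    (hb2 : v2.2 = true) (hb4 : v4.2 = true)
    (n02 : ((.xgen i1 j1 : GammaGen ι), true) ≠ v2)
    (n04 : ((.xgen i1 j1 : GammaGen ι), true) ≠ v4)
    (n24 : v2 ≠ v4) (n13 : v1 ≠ v3) (n35 : v3 ≠ v5) (n15 : v1 ≠ v5) : False := by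
  obtain ⟨hE1, g1, hm1a, rfl⟩ := adj_xgen_true hlab h1
  obtain ⟨-, g3, hm3a, rfl⟩ := adj_xgen_true hlab h6.symm
  rcases adj_nonx_true hlab (fun p q => menu_nonx hm1a) h2 with
    ⟨i2, j2, hE2, hm1b, rfl⟩ | ⟨h', hM, rfl⟩
  swap
  · simp at hb2
  obtain ⟨-, g2, hm2a, rfl⟩ := adj_xgen_true hlab h3
  rcases adj_nonx_true hlab (fun p q => menu_nonx hm2a) h4 with
    ⟨i3, j3, hE3, hm2b, rfl⟩ | ⟨h', hM, rfl⟩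
  swap
  · simp at hb4
  obtain ⟨-, g3', hm3b, heq⟩ := adj_xgen_true hlab h5
  rw [Prod.mk.injEq] at heq
  obtain ⟨e, -⟩ := heq
  rw [← e] at hm3b
  -- pair inequalities
  have p12 : ¬(i1 = i2 ∧ j1 = j2) := by
    rintro ⟨rfl, rfl⟩; exact n02 rfl
  have p13 : ¬(i1 = i3 ∧ j1 = j3) := by
    rintro ⟨rfl, rfl⟩; exact n04 rfl
  have p23 : ¬(i2 = i3 ∧ j2 = j3) := by
    rintro ⟨rfl, rfl⟩; exact n24 rfl
  have g12 : g1 ≠ g2 := fun e' => n13 (by rw [e'])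
  have g23 : g2 ≠ g3 := fun e' => n35 (by rw [e'])
  have g13 : g1 ≠ g3 := fun e' => n15 (by rw [e'])
  obtain ⟨t1, rfl, ht1a, ht1b⟩ := menu_two p12 hm1a hm1b
  obtain ⟨t2, rfl, ht2a, ht2b⟩ := menu_two p23 hm2a hm2b
  obtain ⟨t3, rfl, ht3a, ht3b⟩ := menu_two p13 hm3a hm3b
  have t12 : t1 ≠ t2 := fun e' => g12 (by rw [e'])
  have t23 : t2 ≠ t3 := fun e' => g23 (by rw [e'])
  have t13 : t1 ≠ t3 := fun e' => g13 (by rw [e'])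
  exact htf ⟨t1, t2, t3, t12, t13, t23,
    pair_edge hE2 ht1b ht2a t12,
    pair_edge hE3 ht2b ht3b t23,
    pair_edge hE1 ht1a ht3a t13⟩

lemma core6L_anchor (hirr : ∀ i, ¬E i i) (hsimple : ∀ i j, E i j → ¬E j i)
    (htf : TriangleFree E) (hlab : ∀ i j, E i j → 3 ≤ lab i j)
    {i1 j1 : ι} {v1 v2 v3 v4 v5 : GammaVert ι}
    (h1 : (LinkGamma E lab).Adj (.xgen i1 j1, false) v1)
    (h2 : (LinkGamma E lab).Adj v1 v2) (h3 : (LinkGamma E lab).Adj v2 v3)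
    (h4 : (LinkGamma E lab).Adj v3 v4) (h5 : (LinkGamma E lab).Adj v4 v5)
    (h6 : (LinkGamma E lab).Adj v5 (.xgen i1 j1, false))
    (hb2 : v2.2 = false) (hb4 : v4.2 = false)
    (n02 : ((.xgen i1 j1 : GammaGen ι), false) ≠ v2)
    (n04 : ((.xgen i1 j1 : GammaGen ι), false) ≠ v4)
    (n24 : v2 ≠ v4) (n13 : v1 ≠ v3) (n35 : v3 ≠ v5) (n15 : v1 ≠ v5) : False := by
  obtain ⟨hE1, g1, hm1a, rfl⟩ := adj_xgen_false hlab h1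
  obtain ⟨-, g3, hm3a, rfl⟩ := adj_xgen_false hlab h6.symm
  rcases adj_nonx_false hlab (fun p q => menu_nonx hm1a) h2 with
    ⟨i2, j2, hE2, hm1b, rfl⟩ | ⟨h', hM, rfl⟩
  swap
  · simp at hb2
  obtain ⟨-, g2, hm2a, rfl⟩ := adj_xgen_false hlab h3
  rcases adj_nonx_false hlab (fun p q => menu_nonx hm2a) h4 with
    ⟨i3, j3, hE3, hm2b, rfl⟩ | ⟨h', hM, rfl⟩
  swap
  · simp at hb4
  obtain ⟨-, g3', hm3b, heq⟩ := adj_xgen_false hlab h5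
  rw [Prod.mk.injEq] at heq
  obtain ⟨e, -⟩ := heq
  rw [← e] at hm3b
  have p12 : ¬(i1 = i2 ∧ j1 = j2) := by
    rintro ⟨rfl, rfl⟩; exact n02 rfl
  have p13 : ¬(i1 = i3 ∧ j1 = j3) := by
    rintro ⟨rfl, rfl⟩; exact n04 rfl
  have p23 : ¬(i2 = i3 ∧ j2 = j3) := by
    rintro ⟨rfl, rfl⟩; exact n24 rfl
  have g12 : g1 ≠ g2 := fun e' => n13 (by rw [e'])
  have g23 : g2 ≠ g3 := fun e' => n35 (by rw [e'])
  have g13 : g1 ≠ g3 := fun e' => n15 (by rw [e'])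
  obtain ⟨t1, rfl, ht1a, ht1b⟩ := menu_two p12 hm1a hm1b
  obtain ⟨t2, rfl, ht2a, ht2b⟩ := menu_two p23 hm2a hm2b
  obtain ⟨t3, rfl, ht3a, ht3b⟩ := menu_two p13 hm3a hm3b
  have t12 : t1 ≠ t2 := fun e' => g12 (by rw [e'])
  have t23 : t2 ≠ t3 := fun e' => g23 (by rw [e'])
  have t13 : t1 ≠ t3 := fun e' => g13 (by rw [e'])
  exact htf ⟨t1, t2, t3, t12, t13, t23,
    pair_edge hE2 ht1b ht2a t12,
    pair_edge hE3 ht2b ht3b t23,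
    pair_edge hE1 ht1a ht3a t13⟩

lemma core6H (hirr : ∀ i, ¬E i i) (hsimple : ∀ i j, E i j → ¬E j i)
    (htf : TriangleFree E) (hlab : ∀ i j, E i j → 3 ≤ lab i j)
    {v0 v1 v2 v3 v4 v5 : GammaVert ι}
    (h1 : (LinkGamma E lab).Adj v0 v1) (h2 : (LinkGamma E lab).Adj v1 v2)
    (h3 : (LinkGamma E lab).Adj v2 v3) (h4 : (LinkGamma E lab).Adj v3 v4)
    (h5 : (LinkGamma E lab).Adj v4 v5) (h6 : (LinkGamma E lab).Adj v5 v0)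
    (hb0 : v0.2 = true) (hb1 : v1.2 = true) (hb2 : v2.2 = true)
    (hb3 : v3.2 = true) (hb4 : v4.2 = true) (hb5 : v5.2 = true)
    (n02 : v0 ≠ v2) (n04 : v0 ≠ v4) (n24 : v2 ≠ v4)
    (n13 : v1 ≠ v3) (n35 : v3 ≠ v5) (n15 : v1 ≠ v5) : False := by
  obtain ⟨g0, b0⟩ := v0
  simp only at hb0
  subst hb0
  match g0, h1, h6, n02, n04 with
  | .xgen i j, h1, h6, n02, n04 =>
    exact core6H_anchor hirr hsimple htf hlab h1 h2 h3 h4 h5 h6 hb2 hb4 n02 n04 n24 n13 n35 n15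
  | .vgen t, h1, h6, n02, n04 =>
    rcases adj_nonx_true hlab (fun p q => by simp) h1 with ⟨i, j, hE, hm, rfl⟩ | ⟨h', hM, rfl⟩
    · exact core6H_anchor hirr hsimple htf hlab h2 h3 h4 h5 h6 h1 hb3 hb5 n13 n15
        n35 n24 (fun e => n04 e.symm) (fun e => n02 e.symm)
    · simp at hb1
  | .dgen p' q' k, h1, h6, n02, n04 =>
    rcases adj_nonx_true hlab (fun p q => by simp) h1 with ⟨i, j, hE, hm, rfl⟩ | ⟨h', hM, rfl⟩
    · exact core6H_anchor hirr hsimple htf hlab h2 h3 h4 h5 h6 h1 hb3 hb5 n13 n15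
        n35 n24 (fun e => n04 e.symm) (fun e => n02 e.symm)
    · simp at hb1

lemma core6L (hirr : ∀ i, ¬E i i) (hsimple : ∀ i j, E i j → ¬E j i)
    (htf : TriangleFree E) (hlab : ∀ i j, E i j → 3 ≤ lab i j)
    {v0 v1 v2 v3 v4 v5 : GammaVert ι}
    (h1 : (LinkGamma E lab).Adj v0 v1) (h2 : (LinkGamma E lab).Adj v1 v2)
    (h3 : (LinkGamma E lab).Adj v2 v3) (h4 : (LinkGamma E lab).Adj v3 v4)
    (h5 : (LinkGamma E lab).Adj v4 v5) (h6 : (LinkGamma E lab).Adj v5 v0)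
    (hb0 : v0.2 = false) (hb1 : v1.2 = false) (hb2 : v2.2 = false)
    (hb3 : v3.2 = false) (hb4 : v4.2 = false) (hb5 : v5.2 = false)
    (n02 : v0 ≠ v2) (n04 : v0 ≠ v4) (n24 : v2 ≠ v4)
    (n13 : v1 ≠ v3) (n35 : v3 ≠ v5) (n15 : v1 ≠ v5) : False := by
  obtain ⟨g0, b0⟩ := v0
  simp only at hb0
  subst hb0
  match g0, h1, h6, n02, n04 with
  | .xgen i j, h1, h6, n02, n04 =>
    exact core6L_anchor hirr hsimple htf hlab h1 h2 h3 h4 h5 h6 hb2 hb4 n02 n04 n24 n13 n35 n15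
  | .vgen t, h1, h6, n02, n04 =>
    rcases adj_nonx_false hlab (fun p q => by simp) h1 with ⟨i, j, hE, hm, rfl⟩ | ⟨h', hM, rfl⟩
    · exact core6L_anchor hirr hsimple htf hlab h2 h3 h4 h5 h6 h1 hb3 hb5 n13 n15
        n35 n24 (fun e => n04 e.symm) (fun e => n02 e.symm)
    · simp at hb1
  | .dgen p' q' k, h1, h6, n02, n04 =>
    rcases adj_nonx_false hlab (fun p q => by simp) h1 with ⟨i, j, hE, hm, rfl⟩ | ⟨h', hM, rfl⟩
    · exact core6L_anchor hirr hsimple htf hlab h2 h3 h4 h5 h6 h1 hb3 hb5 n13 n15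
        n35 n24 (fun e => n04 e.symm) (fun e => n02 e.symm)
    · simp at hb1

lemma list_sum_ge (l : List ℝ) (c : ℝ) (h : ∀ x ∈ l, c ≤ x) :
    c * l.length ≤ l.sum := by
  induction l with
  | nil => simp
  | cons x xs ih =>
    have hx := h x (by simp)
    have hxs := ih (fun y hy => h y (by simp [hy]))
    rw [List.sum_cons, List.length_cons]
    push_cast
    linarith

end GammaProof

/-- If `Γ` is a finite triangle-free directed simple graph with edge
labels at least 3, and each middle edge of `L_Γ` is given length `π/2` while every
other edge is given length `π/4`, then every embedded cycle in `L_Γ` has total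
length at least `2π`. -/
theorem weighted_cycles_two_pi {ι : Type*} [Fintype ι] [DecidableEq ι]
    (E : ι → ι → Prop) (lab : ι → ι → ℕ)
    (hirr : ∀ i, ¬E i i) (hsimple : ∀ i j, E i j → ¬E j i)
    (hlab : ∀ i j, E i j → 3 ≤ lab i j) (htf : TriangleFree E) :
    ∀ (v : GammaVert ι) (w : (LinkGamma E lab).Walk v v),
      w.IsCycle →
        2 * Real.pi ≤ (w.darts.map (fun d => edgeWeight d.toProd.1 d.toProd.2)).sum := by
  intro v w hw
  have hpi := Real.pi_pos
  have hlen3 := hw.three_le_length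
  have hpar : w.length % 2 = 0 := by
    have := GammaProof.walk_parity hlab w
    omega
  have hsplit : w.length = 4 ∨ w.length = 6 ∨ 8 ≤ w.length := by omega
  rcases hsplit with hlen | hlen | hlen
  · -- length 4
    cases w with
    | nil => simp at hlen
    | @cons _ a _ h1 p =>
      cases p with
      | nil => simp at hlen
      | @cons _ b _ h2 p =>
        cases p with
        | nil => simp at hlen
        | @cons _ c _ h3 p =>
          cases p with
          | nil => simp at hlen
          | @cons _ d _ h4 p =>
            cases p with
            | @cons _ e _ h5 p =>
              simp only [SimpleGraph.Walk.length_cons] at hlen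
              omega
            | nil =>
              have hnd := hw.support_nodup
              simp only [SimpleGraph.Walk.support_cons, SimpleGraph.Walk.support_nil,
                List.tail_cons, List.nodup_cons, List.mem_cons, List.mem_singleton,
                List.not_mem_nil, or_false, List.nodup_nil, and_true, not_or] at hnd
              obtain ⟨⟨hab, hac, hav⟩, ⟨hbc, hbv⟩, hcv, -⟩ := hnd
              have m1 : v.2 ≠ a.2 := GammaProof.four_cycle_ne hirr hsimple htf hlab
                h1 h2 h3 h4 (fun e' => hbv e'.symm) hac
              have m2 : a.2 ≠ b.2 := GammaProof.four_cycle_ne hirr hsimple htf hlab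
                h2 h3 h4 h1 hac hbv
              have m3 : b.2 ≠ c.2 := GammaProof.four_cycle_ne hirr hsimple htf hlab
                h3 h4 h1 h2 hbv (fun e' => hac e'.symm)
              have m4 : c.2 ≠ v.2 := GammaProof.four_cycle_ne hirr hsimple htf hlab
                h4 h1 h2 h3 (fun e' => hac e'.symm) (fun e' => hbv e'.symm)
              have w1 := GammaProof.weight_adj hlab h1
              have w2 := GammaProof.weight_adj hlab h2
              have w3 := GammaProof.weight_adj hlab h3
              have w4 := GammaProof.weight_adj hlab h4
              rw [if_neg m1] at w1
              rw [if_neg m2] at w2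
              rw [if_neg m3] at w3
              rw [if_neg m4] at w4
              simp only [SimpleGraph.Walk.darts_cons, SimpleGraph.Walk.darts_nil,
                List.map_cons, List.map_nil, List.sum_cons, List.sum_nil]
              rw [w1, w2, w3, w4]
              linarith
  · -- length 6
    cases w with
    | nil => simp at hlen
    | @cons _ a _ h1 p =>
      cases p with
      | nil => simp at hlen
      | @cons _ b _ h2 p =>
        cases p with
        | nil => simp at hlen
        | @cons _ c _ h3 p =>
          cases p with
          | nil => simp at hlen
          | @cons _ d _ h4 p =>
            cases p with
            | nil => simp at hlen
            | @cons _ e _ h5 p =>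
              cases p with
              | nil => simp at hlen
              | @cons _ f _ h6 p =>
                cases p with
                | @cons _ f' _ h7 p =>
                  simp only [SimpleGraph.Walk.length_cons] at hlen
                  omega
                | nil =>
                  have hnd := hw.support_nodup
                  simp only [SimpleGraph.Walk.support_cons, SimpleGraph.Walk.support_nil,
                    List.tail_cons, List.nodup_cons, List.mem_cons, List.mem_singleton,
                    List.not_mem_nil, or_false, List.nodup_nil, and_true, not_or] at hnd
                  obtain ⟨⟨hab, hac, had, hae, hav⟩, ⟨hbc, hbd, hbe, hbv⟩,
                    ⟨hcd, hce, hcv⟩, ⟨hde, hdv⟩, hev, -⟩ := hnd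
                  have w1 := GammaProof.weight_adj hlab h1
                  have w2 := GammaProof.weight_adj hlab h2
                  have w3 := GammaProof.weight_adj hlab h3
                  have w4 := GammaProof.weight_adj hlab h4
                  have w5 := GammaProof.weight_adj hlab h5
                  have w6 := GammaProof.weight_adj hlab h6
                  simp only [SimpleGraph.Walk.darts_cons, SimpleGraph.Walk.darts_nil,
                    List.map_cons, List.map_nil, List.sum_cons, List.sum_nil]
                  rw [w1, w2, w3, w4, w5, w6]
                  by_cases hall : v.2 = a.2 ∧ a.2 = b.2 ∧ b.2 = c.2 ∧ c.2 = d.2 ∧ d.2 = e.2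
                  · exfalso
                    obtain ⟨e1, e2, e3, e4, e5⟩ := hall
                    rcases Bool.eq_false_or_eq_true v.2 with hv | hv
                    · exact GammaProof.core6H hirr hsimple htf hlab h1 h2 h3 h4 h5 h6
                        hv (by rw [← e1]; exact hv) (by rw [← e2, ← e1]; exact hv)
                        (by rw [← e3, ← e2, ← e1]; exact hv)
                        (by rw [← e4, ← e3, ← e2, ← e1]; exact hv)
                        (by rw [← e5, ← e4, ← e3, ← e2, ← e1]; exact hv)
                        (fun e' => hbv e'.symm) (fun e' => hdv e'.symm) hbd hac hce hae
                    · exact GammaProof.core6L hirr hsimple htf hlab h1 h2 h3 h4 h5 h6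
                        hv (by rw [← e1]; exact hv) (by rw [← e2, ← e1]; exact hv)
                        (by rw [← e3, ← e2, ← e1]; exact hv)
                        (by rw [← e4, ← e3, ← e2, ← e1]; exact hv)
                        (by rw [← e5, ← e4, ← e3, ← e2, ← e1]; exact hv)
                        (fun e' => hbv e'.symm) (fun e' => hdv e'.symm) hbd hac hce hae
                  · clear hw hpar hlen hlen3 hab hac had hae hav hbc hbd hbe hbv hcd hce hcv hde hdv hev h1 h2 h3 h4 h5 h6
                    rcases Bool.eq_false_or_eq_true v.2 with b0 | b0 <;>
                    rcases Bool.eq_false_or_eq_true a.2 with b1 | b1 <;>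
                    rcases Bool.eq_false_or_eq_true b.2 with b2 | b2 <;>
                    rcases Bool.eq_false_or_eq_true c.2 with b3 | b3 <;>
                    rcases Bool.eq_false_or_eq_true d.2 with b4 | b4 <;>
                    rcases Bool.eq_false_or_eq_true e.2 with b5 | b5 <;>
                    simp only [b0, b1, b2, b3, b4, b5] at hall ⊢ <;>
                    first
                      | (simp at hall; done)
                      | (norm_num; linarith)
  · -- length ≥ 8
    have hb : ∀ x ∈ w.darts.map (fun d => edgeWeight d.toProd.1 d.toProd.2),
        Real.pi / 4 ≤ x := by
      intro x hx
      rw [List.mem_map] at hx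
      obtain ⟨d, -, rfl⟩ := hx
      rw [edgeWeight]
      split_ifs
      · linarith
      · exact le_refl _
    have hsum := GammaProof.list_sum_ge _ _ hb
    rw [List.length_map, SimpleGraph.Walk.length_darts] at hsum
    have hc : (8 : ℝ) ≤ (w.length : ℝ) := by exact_mod_cast hlen
    nlinarith [hpi, hsum, hc]
end
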